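/- arXiv:1201.5019 — 8 statements merged into one kernel-verified Lean document; each statement's English description precedes it below -/
import Mathlib

section
/- Let A be a totally unimodular real m×n matrix, k ∈ {1,…,m}, and I ⊆ {1,…,m} with k ∉ I. If θ* = (x₊*, x₋*, y₊*, y₋*) is an extreme point of the standard-form LP polyhedron Q that minimizes the LP objective c over Q, then the vector x* := x₊* − x₋* lies in the feasible set F and minimizes the l0 objective ‖A(Ī,:)x‖₀ over all x ∈ F. -/
open Matrix

/-- The feasible set `F = {x : A(k,:)x = 1, A(i,:)x = 0 for i ∈ I}`. -/
def feasSet {m n : ℕ} (A : Matrix (Fin m) (Fin n) ℝ) (k : Fin m) (I : Finset (Fin m)) :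
    Set (Fin n → ℝ) :=
  {x | A k ⬝ᵥ x = 1 ∧ ∀ i ∈ I, A i ⬝ᵥ x = 0}

open Classical in
/-- The l0 objective `‖A(Ī,:)x‖₀`: number of indices `i ∉ I` with `A(i,:)x ≠ 0`. -/
noncomputable def l0Obj {m n : ℕ} (A : Matrix (Fin m) (Fin n) ℝ) (I : Finset (Fin m))
    (x : Fin n → ℝ) : ℕ :=
  (Iᶜ.filter (fun i => A i ⬝ᵥ x ≠ 0)).card

/-- Points `(x₊, x₋, y₊, y₋)` of the standard-form LP. -/
abbrev LPPoint (m n : ℕ) (I : Finset (Fin m)) : Type :=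
  (Fin n → ℝ) × (Fin n → ℝ) × ({i : Fin m // i ∉ I} → ℝ) × ({i : Fin m // i ∉ I} → ℝ)

/-- The standard-form LP polyhedron `Q`. -/
def lpQ {m n : ℕ} (A : Matrix (Fin m) (Fin n) ℝ) (k : Fin m) (I : Finset (Fin m)) :
    Set (LPPoint m n I) :=
  {θ | 0 ≤ θ.1 ∧ 0 ≤ θ.2.1 ∧ 0 ≤ θ.2.2.1 ∧ 0 ≤ θ.2.2.2 ∧
    (∀ j : {i : Fin m // i ∉ I}, A j.1 ⬝ᵥ (θ.1 - θ.2.1) = θ.2.2.1 j - θ.2.2.2 j) ∧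
    A k ⬝ᵥ (θ.1 - θ.2.1) = 1 ∧
    ∀ i ∈ I, A i ⬝ᵥ (θ.1 - θ.2.1) = 0}

/-- The LP objective `c(x₊,x₋,y₊,y₋) = Σ_{i∈Ī} (y₊(i) + y₋(i))`. -/
noncomputable def lpObj {m n : ℕ} (I : Finset (Fin m)) (θ : LPPoint m n I) : ℝ :=
  ∑ j : {i : Fin m // i ∉ I}, (θ.2.2.1 j + θ.2.2.2 j)


lemma det_mem_subring {ι : Type*} [Fintype ι] [DecidableEq ι] (S : Subring ℝ)
    (M : Matrix ι ι ℝ) (h : ∀ i j, M i j ∈ S) : M.det ∈ S := by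
  rw [Matrix.det_apply]
  refine sum_mem (fun σ _ => ?_)
  rcases Int.units_eq_one_or (Equiv.Perm.sign σ) with hs | hs <;> rw [hs] <;>
    simp only [one_smul, Units.neg_smul, neg_mem_iff] <;>
    exact prod_mem (fun i _ => h _ _)

lemma exists_inj_isUnit_det {ι κ : Type*} [Fintype ι] [Fintype κ] [DecidableEq ι] [DecidableEq κ]
    (w : ι → (κ → ℝ)) (hw : LinearIndependent ℝ w) :
    ∃ p : ι → κ, Function.Injective p ∧ IsUnit (Matrix.of (fun i j : ι => w j (p i))).det := by
  classical
  set W : Matrix ι κ ℝ := Matrix.of w with hW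
  have hinj : Function.Injective Wᵀ.mulVecLin := by
    rw [← LinearMap.ker_eq_bot, LinearMap.ker_eq_bot']
    intro g hg
    rw [Fintype.linearIndependent_iff] at hw
    funext i
    refine hw g ?_ i
    funext c
    have h1 : (Wᵀ *ᵥ g) c = 0 := congrFun hg c
    have h2 : ∑ x : ι, g x * W x c = 0 := by
      simpa [Matrix.mulVec, dotProduct, Matrix.transpose_apply, mul_comm] using h1
    simpa [Finset.sum_apply, hW] using h2
  have hrank : W.rank = Fintype.card ι := by
    rw [← Matrix.rank_transpose]
    show Module.finrank ℝ (LinearMap.range Wᵀ.mulVecLin) = _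
    rw [LinearMap.finrank_range_of_inj hinj]
    simp [Module.finrank_fintype_fun_eq_card]
  have hspan : Submodule.span ℝ (Set.range Wᵀ) = ⊤ := by
    rw [show Set.range Wᵀ = Set.range (Matrix.col W) from rfl, ← Matrix.range_mulVecLin]
    apply Submodule.eq_top_of_finrank_eq
    rw [show Module.finrank ℝ ↥(LinearMap.range W.mulVecLin) = W.rank from rfl, hrank]
    simp [Module.finrank_fintype_fun_eq_card]
  obtain ⟨t, htsub, htspan, htind⟩ := exists_linearIndependent ℝ (Set.range Wᵀ)
  have htfin : t.Finite := htind.setFinite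
  haveI : Fintype t := htfin.fintype
  let hb : Module.Basis t ℝ (ι → ℝ) := Module.Basis.mk htind (by rw [Subtype.range_coe, htspan, hspan])
  have hcard : Fintype.card t = Fintype.card ι := by
    have := Module.finrank_eq_card_basis hb
    simp only [Module.finrank_fintype_fun_eq_card] at this
    omega
  let e : ι ≃ t := (Fintype.equivOfCardEq hcard).symm
  have hpick : ∀ i : ι, ∃ c : κ, Wᵀ c = (e i : ι → ℝ) := fun i => htsub (e i).2
  choose p hp using hpick
  refine ⟨p, ?_, ?_⟩
  · intro i i' hii'
    have : (e i : ι → ℝ) = (e i' : ι → ℝ) := by rw [← hp i, ← hp i', hii']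
    exact e.injective (Subtype.ext this)
  · have hD : (Matrix.of (fun i j : ι => w j (p i)))ᵀ =
        (Pi.basisFun ℝ ι).toMatrix ⇑(hb.reindex e.symm) := by
      ext j i
      have h2 : w j (p i) = (e i : ι → ℝ) j := by
        have := congrFun (hp i) j
        simpa [hW, Matrix.transpose_apply] using this
      simp [Matrix.transpose_apply, h2, Module.Basis.toMatrix_apply, Module.Basis.reindex_apply,
        Module.Basis.coe_mk, hb]
    have hU : IsUnit ((Pi.basisFun ℝ ι).toMatrix ⇑(hb.reindex e.symm)) := by
      have := (Pi.basisFun ℝ ι).invertibleToMatrix (hb.reindex e.symm)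
      exact isUnit_of_invertible _
    rw [Matrix.isUnit_iff_isUnit_det] at hU
    rw [← Matrix.det_transpose, hD]
    exact hU


lemma signType_cast_mem_bot {x : ℝ} (h : x ∈ Set.range (SignType.cast : SignType → ℝ)) :
    x ∈ (⊥ : Subring ℝ) := by
  obtain ⟨sg, rfl⟩ := h
  rcases sg with _ | _ | _
  · exact ⟨0, by simp⟩
  · exact ⟨-1, by simp⟩
  · exact ⟨1, by simp⟩

/-- TU is preserved by selecting columns and multiplying them by signs. -/
lemma Matrix.IsTotallyUnimodular.col_sign {X Y Y' : Type*} {A : Matrix X Y ℝ}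
    (hA : A.IsTotallyUnimodular) (g : Y' → Y) (ε : Y' → SignType) :
    (Matrix.of (fun i j => (ε j : ℝ) * A i (g j))).IsTotallyUnimodular := by
  rw [Matrix.isTotallyUnimodular_iff]
  intro k f g'
  have key : (Matrix.of (fun i j => (ε j : ℝ) * A i (g j))).submatrix f g' =
      (A.submatrix f (g ∘ g')) * Matrix.diagonal (fun j => ((ε (g' j) : ℝ))) := by
    ext i j
    simp [Matrix.mul_diagonal, Matrix.submatrix_apply, mul_comm]
  rw [key, Matrix.det_mul, Matrix.det_diagonal]
  rw [Matrix.isTotallyUnimodular_iff] at hA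
  obtain ⟨s, hs⟩ := hA k f (g ∘ g')
  have hprod : ∏ j : Fin k, ((ε (g' j) : ℝ)) = (((∏ j : Fin k, ε (g' j) : SignType) : ℝ)) := by
    exact (map_prod (SignType.castHom : SignType →*₀ ℝ) (fun j => ε (g' j)) Finset.univ).symm
  rw [← hs, hprod]
  exact ⟨s * ∏ j : Fin k, ε (g' j), by push_cast; ring⟩

/-- A TU linear system with integral rhs whose solution is the unique one with its
zero pattern has integral entries. -/
lemma tu_unique_integral {ρ γ : Type*} [Fintype ρ] [Fintype γ] [DecidableEq ρ] [DecidableEq γ]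
    {M : Matrix ρ γ ℝ} (hM : M.IsTotallyUnimodular) {b : ρ → ℝ}
    (hb : ∀ r, b r ∈ (⊥ : Subring ℝ)) {v : γ → ℝ} (hv : M *ᵥ v = b)
    (huniq : ∀ d : γ → ℝ, M *ᵥ d = 0 → (∀ c, v c = 0 → d c = 0) → d = 0) :
    ∀ c, v c ∈ (⊥ : Subring ℝ) := by
  classical
  set s : Finset γ := Finset.univ.filter (fun c => v c ≠ 0) with hs
  have hvz : ∀ c, c ∉ s → v c = 0 := by
    intro c hc; by_contra h; exact hc (by simp [hs, h])
  have hind : LinearIndependent ℝ (fun c : s => (fun r => M r c.1)) := by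
    rw [Fintype.linearIndependent_iff]
    intro g hg
    set d : γ → ℝ := fun c => if h : c ∈ s then g ⟨c, h⟩ else 0 with hd
    have hd0 : d = 0 := by
      refine huniq d ?_ ?_
      · funext r
        have hgr : ∑ c : s, g c * M r c.1 = 0 := by
          have := congrFun hg r
          simpa [Finset.sum_apply] using this
        simp only [Matrix.mulVec, dotProduct, Pi.zero_apply]
        rw [← Finset.sum_subset (Finset.subset_univ s) (by
          intro c _ hc
          have : d c = 0 := by simp [hd, hc]
          simp [this])]
        rw [← Finset.sum_attach s (fun c => M r c * d c), ← hgr]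
        apply Finset.sum_congr rfl
        intro c _
        simp [hd, c.2, mul_comm]
      · intro c hc
        simp [hd, hs, hc]
    intro i
    have := congrFun hd0 i.1
    simpa [hd, i.2] using this
  obtain ⟨p, hpinj, hpdet⟩ := exists_inj_isUnit_det _ hind
  set B : Matrix s s ℝ := Matrix.of (fun i j : s => M (p i) j.1) with hB
  have hBdet : IsUnit B.det := hpdet
  have hBdet_sign : B.det = 1 ∨ B.det = -1 := by
    have hmem : B.det ∈ Set.range (SignType.cast : SignType → ℝ) := by
      have := (Matrix.isTotallyUnimodular_iff_fintype M).mp hM s p (fun j => j.1)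
      convert this using 2; rfl
    obtain ⟨sg, hsg⟩ := hmem
    rcases sg with _ | _ | _
    · exfalso; rw [← hsg] at hBdet; simpa using hBdet
    · right; rw [← hsg]; rfl
    · left; rw [← hsg]; rfl
  have hsys : B *ᵥ (fun c : s => v c.1) = fun i : s => b (p i) := by
    funext i
    have hvi := congrFun hv (p i)
    simp only [Matrix.mulVec, dotProduct] at hvi ⊢
    rw [← hvi]
    rw [← Finset.sum_subset (Finset.subset_univ s) (by
      intro c _ hc; simp [hvz c hc])]
    rw [← Finset.sum_attach s (fun c => M (p i) c * v c)]
    rfl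
  have key : B.det • (fun c : s => v c.1) = B.adjugate *ᵥ (fun i : s => b (p i)) := by
    rw [← hsys, Matrix.mulVec_mulVec, Matrix.adjugate_mul, Matrix.smul_mulVec,
      Matrix.one_mulVec]
  have hadj_int : ∀ i j : s, B.adjugate i j ∈ (⊥ : Subring ℝ) := by
    intro i j
    rw [Matrix.adjugate_apply]
    apply det_mem_subring
    intro r c
    by_cases hrj : r = j
    · subst hrj
      rw [Matrix.updateRow_self]
      by_cases hci : c = i
      · subst hci; simpa using one_mem (⊥ : Subring ℝ)
      · simpa [Pi.single_eq_of_ne hci] using zero_mem (⊥ : Subring ℝ)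
    · rw [Matrix.updateRow_ne hrj]
      exact signType_cast_mem_bot (hM.apply _ _)
  have hint : ∀ i : s, v i.1 ∈ (⊥ : Subring ℝ) := by
    intro i
    have h1 := congrFun key i
    simp only [Pi.smul_apply, smul_eq_mul] at h1
    have h2 : (B.adjugate *ᵥ fun i : s => b (p i)) i ∈ (⊥ : Subring ℝ) := by
      simp only [Matrix.mulVec, dotProduct]
      exact sum_mem (fun j _ => mul_mem (hadj_int i j) (hb (p j)))
    rcases hBdet_sign with h | h
    · rw [h, one_mul] at h1; rw [h1]; exact h2
    · rw [h] at h1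
      have : v i.1 = -((B.adjugate *ᵥ fun i : s => b (p i)) i) := by linarith
      rw [this]; exact neg_mem h2
  intro c
  by_cases hc : c ∈ s
  · exact hint ⟨c, hc⟩
  · rw [hvz c hc]; exact zero_mem _
lemma det_updateRow_one {ι : Type*} [Fintype ι] [DecidableEq ι] (k₀ : ι) (s : ι → ℝ) :
    ((1 : Matrix ι ι ℝ).updateRow k₀ s).det = s k₀ := by
  have hrep : s = ∑ c : ι, s c • (1 : Matrix ι ι ℝ) c := by
    funext j
    simp [Matrix.one_apply, Finset.sum_apply]
  have h2 := Matrix.det_updateRow_sum (1 : Matrix ι ι ℝ) k₀ s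
  rw [← hrep] at h2
  simpa using h2

/-- Every feasible point of a TU system `A k ⬝ x = 1` has a companion with the same
(or smaller) support pattern of `A ⬝ x` and all entries of `A ⬝ x'` bounded by 1. -/
lemma exists_bounded_rep {m n : ℕ} {A : Matrix (Fin m) (Fin n) ℝ} (hA : A.IsTotallyUnimodular)
    {x : Fin n → ℝ} {k : Fin m} (hx : A k ⬝ᵥ x = 1) :
    ∃ x' : Fin n → ℝ, A k ⬝ᵥ x' = 1 ∧ (∀ j, A j ⬝ᵥ x = 0 → A j ⬝ᵥ x' = 0) ∧
      ∀ j, |A j ⬝ᵥ x'| ≤ 1 := by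
  classical
  set T : Set (Fin m) := {j | A j ⬝ᵥ x = 0} with hT
  set rows : Set (Fin n → ℝ) := (fun j => A j) '' T with hrows
  obtain ⟨t, htsub, htspan, htind⟩ := exists_linearIndependent ℝ rows
  -- dot with x functional
  let φ : (Fin n → ℝ) →ₗ[ℝ] ℝ :=
    { toFun := fun v => v ⬝ᵥ x
      map_add' := fun a b => add_dotProduct a b x
      map_smul' := fun c a => smul_dotProduct c a x }
  have hrows_ker : rows ⊆ LinearMap.ker φ := by
    rintro v ⟨j, hj, rfl⟩
    simp only [LinearMap.mem_ker]; exact hj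
  have hAk_not : A k ∉ Submodule.span ℝ t := by
    rw [htspan]
    intro hmem
    have : Submodule.span ℝ rows ≤ LinearMap.ker φ := Submodule.span_le.mpr hrows_ker
    have := this hmem
    simp only [LinearMap.mem_ker] at this
    rw [show φ (A k) = A k ⬝ᵥ x from rfl, hx] at this
    norm_num at this
  have hind' : LinearIndependent ℝ (fun b : ↥(insert (A k) t) => (b : Fin n → ℝ)) :=
    LinearIndepOn.id_insert htind hAk_not
  haveI : Fintype ↥(insert (A k) t) := (htind.setFinite.insert _).fintype
  set ι := ↥(insert (A k) t) with hι
  obtain ⟨p, hpinj, hpdet⟩ := exists_inj_isUnit_det (fun b : ι => (b : Fin n → ℝ)) hind'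
  set B : Matrix ι ι ℝ := Matrix.of (fun j i : ι => (j : Fin n → ℝ) (p i)) with hBdef
  have hBdet : IsUnit B.det := by
    have : B = (Matrix.of (fun i j : ι => (j : Fin n → ℝ) (p i)))ᵀ := by ext i j; rfl
    rw [this, Matrix.det_transpose]
    exact hpdet
  set k₀ : ι := ⟨A k, Set.mem_insert _ _⟩ with hk₀
  set u : ι → ℝ := B⁻¹ *ᵥ Pi.single k₀ 1 with hu
  set x' : Fin n → ℝ := ∑ i : ι, u i • (Pi.single (p i) 1 : Fin n → ℝ) with hx'
  -- generic dot product computation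
  have hdot : ∀ v : Fin n → ℝ, v ⬝ᵥ x' = ∑ i : ι, u i * v (p i) := by
    intro v
    have hone : ∀ i : ι, ∑ c : Fin n, v c * (u i * (Pi.single (p i) 1 : Fin n → ℝ) c)
        = u i * v (p i) := by
      intro i
      rw [Finset.sum_eq_single (p i)]
      · simp [mul_comm]
      · intro c _ hc; simp [Pi.single_eq_of_ne hc]
      · intro h; exact absurd (Finset.mem_univ _) h
    simp only [hx', dotProduct, Finset.sum_apply, Pi.smul_apply, smul_eq_mul,
      Finset.mul_sum]
    rw [Finset.sum_comm]
    exact Finset.sum_congr rfl (fun i _ => hone i)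
  have hBu : B *ᵥ u = Pi.single k₀ 1 := by
    rw [hu, Matrix.mulVec_mulVec, Matrix.mul_nonsing_inv _ hBdet, Matrix.one_mulVec]
  -- values on family members
  have hfam : ∀ j : ι, (j : Fin n → ℝ) ⬝ᵥ x' = (Pi.single k₀ 1 : ι → ℝ) j := by
    intro j
    rw [hdot]
    have := congrFun hBu j
    simp only [Matrix.mulVec, dotProduct, hBdef] at this
    rw [← this]
    apply Finset.sum_congr rfl
    intro i _
    simp [mul_comm]
  -- choose row indices for family members
  have hqfam : ∀ j : ι, ∃ r : Fin m, A r = (j : Fin n → ℝ) ∧ (j = k₀ → r = k) := by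
    intro j
    by_cases hj : j = k₀
    · exact ⟨k, by rw [hj], fun _ => rfl⟩
    · have hjt : (j : Fin n → ℝ) ∈ t := by
        rcases j.2 with h | h
        · exfalso; exact hj (Subtype.ext h)
        · exact h
      obtain ⟨r, _, hr⟩ := htsub hjt
      exact ⟨r, hr, fun h => absurd h hj⟩
  choose qfam hqfam1 hqfam2 using hqfam
  -- B is a submatrix of A
  have hBsub : B = A.submatrix qfam p := by
    ext j i
    simp [hBdef, Matrix.submatrix_apply, hqfam1]
  have hBdet_sign : B.det = 1 ∨ B.det = -1 := by
    have hmem : B.det ∈ Set.range (SignType.cast : SignType → ℝ) := by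
      rw [hBsub]
      exact (Matrix.isTotallyUnimodular_iff_fintype A).mp hA ι qfam p
    obtain ⟨sg, hsg⟩ := hmem
    rcases sg with _ | _ | _
    · exfalso; rw [← hsg] at hBdet; simp at hBdet
    · right; rw [← hsg]; rfl
    · left; rw [← hsg]; rfl
  refine ⟨x', ?_, ?_, ?_⟩
  · have := hfam k₀
    simpa [hk₀] using this
  · -- zero preservation
    intro j hj
    let ψ : (Fin n → ℝ) →ₗ[ℝ] ℝ :=
      { toFun := fun v => v ⬝ᵥ x'
        map_add' := fun a b => add_dotProduct a b x'
        map_smul' := fun c a => smul_dotProduct c a x' }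
    have htker : t ⊆ LinearMap.ker ψ := by
      intro v hv
      have hvι : ((⟨v, Set.mem_insert_of_mem _ hv⟩ : ι) : Fin n → ℝ) ⬝ᵥ x' = 0 := by
        rw [hfam]
        have : (⟨v, Set.mem_insert_of_mem _ hv⟩ : ι) ≠ k₀ := by
          intro h
          apply hAk_not
          rw [← show ((⟨v, Set.mem_insert_of_mem _ hv⟩ : ι) : Fin n → ℝ) = A k from
            congrArg Subtype.val h]
          exact Submodule.subset_span hv
        simp [Pi.single_eq_of_ne this]
      exact hvι
    have hspan_ker : Submodule.span ℝ t ≤ LinearMap.ker ψ := Submodule.span_le.mpr htker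
    have hmem : A j ∈ Submodule.span ℝ t := by
      rw [htspan]
      exact Submodule.subset_span ⟨j, hj, rfl⟩
    exact hspan_ker hmem
  · -- boundedness
    intro j
    set r : ι → ℝ := fun i => A j (p i) with hr
    have hval : A j ⬝ᵥ x' = (r ᵥ* B⁻¹) k₀ := by
      rw [hdot]
      have : (r ᵥ* B⁻¹) k₀ = r ⬝ᵥ (B⁻¹ *ᵥ Pi.single k₀ 1) := by
        rw [dotProduct_mulVec, dotProduct_single]
        ring
      rw [this, hu]
      simp [dotProduct, mul_comm, hr]
    have hupd : (B.updateRow k₀ r).det = (r ᵥ* B⁻¹) k₀ * B.det := by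
      have hfac : B.updateRow k₀ r = ((1 : Matrix ι ι ℝ).updateRow k₀ (r ᵥ* B⁻¹)) * B := by
        ext i c
        by_cases hik : i = k₀
        · rw [hik, Matrix.updateRow_self, Matrix.mul_apply]
          simp_rw [Matrix.updateRow_self]
          have h3 : ∑ c' : ι, (r ᵥ* B⁻¹) c' * B c' c = ((r ᵥ* B⁻¹) ᵥ* B) c := rfl
          rw [h3, Matrix.vecMul_vecMul, Matrix.nonsing_inv_mul _ hBdet, Matrix.vecMul_one]
        · rw [Matrix.updateRow_ne hik, Matrix.mul_apply]
          simp_rw [Matrix.updateRow_ne hik]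
          rw [Finset.sum_eq_single i]
          · simp [Matrix.one_apply]
          · intro b _ hb
            simp [Matrix.one_apply_ne (Ne.symm hb)]
          · intro h; exact absurd (Finset.mem_univ _) h
      rw [hfac, Matrix.det_mul, det_updateRow_one]
    have hupd_sign : (B.updateRow k₀ r).det ∈ Set.range (SignType.cast : SignType → ℝ) := by
      have : B.updateRow k₀ r = A.submatrix (Function.update qfam k₀ j) p := by
        ext i c
        by_cases hik : i = k₀
        · subst hik
          rw [Matrix.updateRow_self]
          simp [Matrix.submatrix_apply, Function.update_self, hr]
        · rw [Matrix.updateRow_ne hik]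
          simp [Matrix.submatrix_apply, Function.update_of_ne hik, hBsub]
      rw [this]
      exact (Matrix.isTotallyUnimodular_iff_fintype A).mp hA ι _ p
    obtain ⟨sg, hsg⟩ := hupd_sign
    have habs : |(B.updateRow k₀ r).det| ≤ 1 := by
      rw [← hsg]
      rcases sg with _ | _ | _ <;> norm_num
    rw [hval]
    have hBd : |B.det| = 1 := by
      rcases hBdet_sign with h | h <;> rw [h] <;> norm_num
    have : (r ᵥ* B⁻¹) k₀ * B.det = (B.updateRow k₀ r).det := hupd.symm
    calc |(r ᵥ* B⁻¹) k₀| = |(r ᵥ* B⁻¹) k₀ * B.det| / |B.det| := by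
          rw [abs_mul, hBd]; ring
      _ = |(B.updateRow k₀ r).det| / |B.det| := by rw [this]
      _ ≤ 1 := by rw [hBd]; simpa using habs

set_option maxHeartbeats 1000000 in
/-- If `θ* = (x₊*, x₋*, y₊*, y₋*)` is an extreme point of `Q` minimizing the LP objective,
then `x* = x₊* − x₋*` is feasible for the l0 problem and minimizes the l0 objective over `F`. -/
theorem stmt0 {m n : ℕ} (A : Matrix (Fin m) (Fin n) ℝ) (hA : A.IsTotallyUnimodular)
    (k : Fin m) (I : Finset (Fin m)) (hk : k ∉ I)
    (θ : LPPoint m n I)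
    (hext : θ ∈ Set.extremePoints ℝ (lpQ A k I))
    (hopt : ∀ θ' ∈ lpQ A k I, lpObj I θ ≤ lpObj I θ') :
    θ.1 - θ.2.1 ∈ feasSet A k I ∧
      ∀ x ∈ feasSet A k I, l0Obj A I (θ.1 - θ.2.1) ≤ l0Obj A I x := by
  classical
  set K := {i : Fin m // i ∉ I}
  set rw : (K ⊕ (Unit ⊕ {i : Fin m // i ∈ I})) → Fin m := Sum.elim Subtype.val (Sum.elim (fun _ => k) Subtype.val) with hrw
  set X : Matrix (Fin n) (K ⊕ (Unit ⊕ {i : Fin m // i ∈ I})) ℝ := Matrix.of (fun j r => A (rw r) j) with hX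
  set U : Matrix K (K ⊕ (Unit ⊕ {i : Fin m // i ∈ I})) ℝ := Matrix.of (fun κ r => if r = Sum.inl κ then 1 else 0) with hU
  set M := (Matrix.fromRows (Matrix.fromRows X (-X)) (Matrix.fromRows (-U) U))ᵀ with hM
  -- total unimodularity of M
  have hXTU : X.IsTotallyUnimodular := by
    have : X = Aᵀ.submatrix id rw := by ext j r; simp [hX, Matrix.transpose_apply]
    rw [this]
    exact hA.transpose.submatrix id rw
  have hXXTU : (Matrix.fromRows X (-X)).IsTotallyUnimodular := by
    have h1 : (Matrix.fromRows X (-X))ᵀ =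
        Matrix.of (fun (r : K ⊕ (Unit ⊕ {i : Fin m // i ∈ I})) (c : Fin n ⊕ Fin n) =>
          ((Sum.elim (fun _ => SignType.pos) (fun _ => SignType.neg) c : SignType) : ℝ) *
            Xᵀ r (Sum.elim id id c)) := by
      ext r c
      rcases c with j | j <;>
        simp [Matrix.transpose_apply, Matrix.fromRows_apply_inl, Matrix.fromRows_apply_inr]
    have h2 := hXTU.transpose.col_sign (Sum.elim id id)
      (Sum.elim (fun _ => SignType.pos) (fun _ => SignType.neg))
    rw [← h1] at h2
    have := h2.transpose
    rwa [Matrix.transpose_transpose] at this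
  have hMTU : M.IsTotallyUnimodular := by
    rw [hM]
    apply Matrix.IsTotallyUnimodular.transpose
    apply hXXTU.fromRows_unitlike
    intro _ i
    rcases i with κ | κ
    · refine ⟨Sum.inl κ, SignType.neg, ?_⟩
      funext r
      simp only [Matrix.fromRows_apply_inl, Matrix.neg_apply, hU, Matrix.of_apply]
      rw [Pi.single_apply]
      split <;> simp_all
    · refine ⟨Sum.inl κ, SignType.pos, ?_⟩
      funext r
      simp only [Matrix.fromRows_apply_inr, hU, Matrix.of_apply]
      rw [Pi.single_apply]
      split <;> simp_all
  set b : (K ⊕ (Unit ⊕ {i : Fin m // i ∈ I})) → ℝ := Sum.elim 0 (Sum.elim 1 0) with hb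
  have hbint : ∀ r, b r ∈ (⊥ : Subring ℝ) := by
    intro r
    rcases r with κ | (u | i) <;> simp [hb] <;> first | exact zero_mem _ | exact one_mem _
  set toVec : LPPoint m n I → (((Fin n ⊕ Fin n) ⊕ (K ⊕ K)) → ℝ) :=
    fun θ' => Sum.elim (Sum.elim θ'.1 θ'.2.1) (Sum.elim θ'.2.2.1 θ'.2.2.2) with htoVec
  have hMmul : ∀ (θ' : LPPoint m n I) (r : K ⊕ (Unit ⊕ {i : Fin m // i ∈ I})),
      (M *ᵥ toVec θ') r = A (rw r) ⬝ᵥ (θ'.1 - θ'.2.1) -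
        Sum.elim (fun κ : K => θ'.2.2.1 κ - θ'.2.2.2 κ) (fun _ => 0) r := by
    intro θ' r
    obtain ⟨xp, xm, yp, ym⟩ := θ'
    simp only [Matrix.mulVec, dotProduct, hM, htoVec, Fintype.sum_sum_type,
      Matrix.transpose_apply, Matrix.fromRows_apply_inl, Matrix.fromRows_apply_inr,
      Sum.elim_inl, Sum.elim_inr, Matrix.of_apply, Matrix.neg_apply, Pi.sub_apply, hX, hU]
    have hU1 : ∑ κ : K, -(if r = Sum.inl κ then (1:ℝ) else 0) * yp κ
        = -(Sum.elim (fun κ : K => yp κ) (fun _ => 0) r) := by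
      rcases r with κ' | r'
      · rw [Finset.sum_eq_single κ']
        · simp
        · intro κ _ hκ
          have : (Sum.inl κ' : K ⊕ (Unit ⊕ {i : Fin m // i ∈ I})) ≠ Sum.inl κ := by
            intro h; exact hκ (Sum.inl_injective h).symm
          simp [this]
        · intro h; exact absurd (Finset.mem_univ _) h
      · simp
    have hU2 : ∑ κ : K, (if r = Sum.inl κ then (1:ℝ) else 0) * ym κ
        = Sum.elim (fun κ : K => ym κ) (fun _ => 0) r := by
      rcases r with κ' | r'
      · rw [Finset.sum_eq_single κ']
        · simp
        · intro κ _ hκ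
          have : (Sum.inl κ' : K ⊕ (Unit ⊕ {i : Fin m // i ∈ I})) ≠ Sum.inl κ := by
            intro h; exact hκ (Sum.inl_injective h).symm
          simp [this]
        · intro h; exact absurd (Finset.mem_univ _) h
      · simp
    rw [hU1, hU2]
    rcases r with κ' | r' <;>
      · simp only [Sum.elim_inl, Sum.elim_inr, dotProduct, Pi.sub_apply, neg_mul,
          Finset.sum_neg_distrib, mul_sub, Finset.sum_sub_distrib]
        ring
  have hQiff : ∀ θ' : LPPoint m n I,
      θ' ∈ lpQ A k I ↔ ((∀ c, 0 ≤ toVec θ' c) ∧ M *ᵥ toVec θ' = b) := by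
    intro θ'
    constructor
    · rintro ⟨h1, h2, h3, h4, h5, h6, h7⟩
      constructor
      · intro c
        rcases c with (j | j) | (κ | κ)
        · exact h1 j
        · exact h2 j
        · exact h3 κ
        · exact h4 κ
      · funext r
        rw [hMmul]
        rcases r with κ | (u | i)
        · show A κ.1 ⬝ᵥ (θ'.1 - θ'.2.1) - (θ'.2.2.1 κ - θ'.2.2.2 κ) = 0
          rw [h5 κ]; ring
        · show A k ⬝ᵥ (θ'.1 - θ'.2.1) - 0 = 1
          rw [h6]; ring
        · show A i.1 ⬝ᵥ (θ'.1 - θ'.2.1) - 0 = 0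
          rw [h7 i.1 i.2]; ring
    · rintro ⟨h1, h2⟩
      refine ⟨fun j => h1 (Sum.inl (Sum.inl j)), fun j => h1 (Sum.inl (Sum.inr j)),
        fun κ => h1 (Sum.inr (Sum.inl κ)), fun κ => h1 (Sum.inr (Sum.inr κ)), ?_, ?_, ?_⟩
      · intro κ
        have hc := congrFun h2 (Sum.inl κ)
        rw [hMmul] at hc
        have h' : A κ.1 ⬝ᵥ (θ'.1 - θ'.2.1) - (θ'.2.2.1 κ - θ'.2.2.2 κ) = 0 := hc
        linarith
      · have hc := congrFun h2 (Sum.inr (Sum.inl ()))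
        rw [hMmul] at hc
        have h' : A k ⬝ᵥ (θ'.1 - θ'.2.1) - 0 = 1 := hc
        linarith
      · intro i hi
        have hc := congrFun h2 (Sum.inr (Sum.inr ⟨i, hi⟩))
        rw [hMmul] at hc
        have h' : A i ⬝ᵥ (θ'.1 - θ'.2.1) - 0 = 0 := hc
        linarith
  -- the solution vector
  set v := toVec θ with hv
  have hθQ := hext.1
  obtain ⟨hnn, hMv⟩ := (hQiff θ).mp hθQ
  -- uniqueness from extremality
  have huniq : ∀ d : ((Fin n ⊕ Fin n) ⊕ (K ⊕ K)) → ℝ, M *ᵥ d = 0 →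
      (∀ c, v c = 0 → d c = 0) → d = 0 := by
    intro d hd0 hsupp
    by_contra hdne
    obtain ⟨c₀, hc₀⟩ : ∃ c, d c ≠ 0 := by
      by_contra h; push_neg at h; exact hdne (funext h)
    set s := Finset.univ.filter (fun c => d c ≠ 0) with hs
    have hsne : s.Nonempty := ⟨c₀, by simp [hs, hc₀]⟩
    set ε := s.inf' hsne (fun c => v c / |d c|) with hε
    have hvpos : ∀ c ∈ s, 0 < v c := by
      intro c hc
      have hdc : d c ≠ 0 := by simpa [hs] using hc
      rcases eq_or_lt_of_le (hnn c) with h | h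
      · exact absurd (hsupp c h.symm) hdc
      · exact h
    have hεpos : 0 < ε := by
      rw [hε, Finset.lt_inf'_iff]
      intro c hc
      have hdc : d c ≠ 0 := by simpa [hs] using hc
      exact div_pos (hvpos c hc) (abs_pos.mpr hdc)
    have hbound : ∀ c, ε * |d c| ≤ v c := by
      intro c
      by_cases hc : c ∈ s
      · have h1 : ε ≤ v c / |d c| := by rw [hε]; exact Finset.inf'_le _ hc
        have hdc : d c ≠ 0 := by simpa [hs] using hc
        rw [← le_div_iff₀ (abs_pos.mpr hdc)]
        exact h1
      · have : d c = 0 := by by_contra h; exact hc (by simp [hs, h])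
        rw [this]
        simpa using hnn c
    set fromVec : (((Fin n ⊕ Fin n) ⊕ (K ⊕ K)) → ℝ) → LPPoint m n I :=
      fun w => (fun j => w (Sum.inl (Sum.inl j)), fun j => w (Sum.inl (Sum.inr j)),
                fun κ => w (Sum.inr (Sum.inl κ)), fun κ => w (Sum.inr (Sum.inr κ)))
      with hfromVec
    have htv : ∀ w, toVec (fromVec w) = w := by
      intro w; funext c; rcases c with (j | j) | (κ | κ) <;> rfl
    set θ₁ := fromVec (v + ε • d) with hθ₁
    set θ₂ := fromVec (v - ε • d) with hθ₂
    have hθ₁Q : θ₁ ∈ lpQ A k I := by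
      rw [hQiff, htv]
      constructor
      · intro c
        have h2 : |ε * d c| ≤ v c := by
          rw [abs_mul, abs_of_pos hεpos]; exact hbound c
        have h3 := neg_abs_le (ε * d c)
        simp only [Pi.add_apply, Pi.smul_apply, smul_eq_mul]
        linarith
      · rw [Matrix.mulVec_add, Matrix.mulVec_smul, hMv, hd0]
        simp
    have hθ₂Q : θ₂ ∈ lpQ A k I := by
      rw [hQiff, htv]
      constructor
      · intro c
        have h2 : |ε * d c| ≤ v c := by
          rw [abs_mul, abs_of_pos hεpos]; exact hbound c
        have h3 := le_abs_self (ε * d c)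
        simp only [Pi.sub_apply, Pi.smul_apply, smul_eq_mul]
        linarith
      · rw [Matrix.mulVec_sub, Matrix.mulVec_smul, hMv, hd0]
        simp
    have hmid : (1/2 : ℝ) • θ₁ + (1/2 : ℝ) • θ₂ = θ := by
      have hcomp : ∀ c, (1/2 : ℝ) * ((v + ε • d) c) + (1/2 : ℝ) * ((v - ε • d) c) = v c := by
        intro c
        simp only [Pi.add_apply, Pi.sub_apply, Pi.smul_apply, smul_eq_mul]
        ring
      have hfeq : ∀ θ' : LPPoint m n I, fromVec (toVec θ') = θ' := by
        rintro ⟨a, b', c', d'⟩; rfl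
      have h1 : toVec ((1/2 : ℝ) • θ₁ + (1/2 : ℝ) • θ₂) = toVec θ := by
        funext c
        rcases c with (j | j) | (κ | κ) <;> exact hcomp _
      have := congrArg fromVec h1
      rwa [hfeq, hfeq] at this
    have hseg : θ ∈ openSegment ℝ θ₁ θ₂ :=
      ⟨1/2, 1/2, by norm_num, by norm_num, by norm_num, hmid⟩
    obtain ⟨hθ₁eq, _⟩ := (mem_extremePoints.mp hext).2 _ hθ₁Q _ hθ₂Q hseg
    have : v + ε • d = v := by
      have := congrArg toVec hθ₁eq
      rwa [htv] at this
    have hd00 : d c₀ = 0 := by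
      have hc := congrFun this c₀
      simp only [Pi.add_apply, Pi.smul_apply, smul_eq_mul] at hc
      have : ε * d c₀ = 0 := by linarith
      rcases mul_eq_zero.mp this with h | h
      · exact absurd h (ne_of_gt hεpos)
      · exact h
    exact hc₀ hd00
  -- integrality of θ
  have hint := tu_unique_integral hMTU hbint hMv huniq
  obtain ⟨h1, h2, h3, h4, h5, h6, h7⟩ := hθQ
  refine ⟨⟨h6, h7⟩, ?_⟩
  intro x hxF
  -- counting lemma
  have hcnt : ∀ z : Fin n → ℝ,
      ∑ κ : K, (if A κ.1 ⬝ᵥ z ≠ 0 then (1:ℝ) else 0) = (l0Obj A I z : ℝ) := by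
    intro z
    rw [show l0Obj A I z = (Iᶜ.filter (fun i => A i ⬝ᵥ z ≠ 0)).card from rfl]
    rw [← Finset.sum_boole]
    rw [Finset.sum_subtype Iᶜ (fun i => Finset.mem_compl)
      (fun i => if A i ⬝ᵥ z ≠ 0 then (1:ℝ) else 0)]
  -- chain 1 : l0(x*) ≤ lpObj θ
  have key1 : ∀ κ : K, (if A κ.1 ⬝ᵥ (θ.1 - θ.2.1) ≠ 0 then (1:ℝ) else 0) ≤
      θ.2.2.1 κ + θ.2.2.2 κ := by
    intro κ
    by_cases hz : A κ.1 ⬝ᵥ (θ.1 - θ.2.1) ≠ 0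
    · rw [if_pos hz]
      obtain ⟨zp, hzp⟩ := hint (Sum.inr (Sum.inl κ))
      obtain ⟨zm, hzm⟩ := hint (Sum.inr (Sum.inr κ))
      have hyp : (zp : ℝ) = θ.2.2.1 κ := hzp
      have hym : (zm : ℝ) = θ.2.2.2 κ := hzm
      have hne : θ.2.2.1 κ - θ.2.2.2 κ ≠ 0 := by rw [← h5 κ]; exact hz
      have hzp0 : (0:ℤ) ≤ zp := by
        have hp := h3 κ
        simp only [Pi.zero_apply] at hp
        rw [← hyp] at hp; exact_mod_cast hp
      have hzm0 : (0:ℤ) ≤ zm := by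
        have hp := h4 κ
        simp only [Pi.zero_apply] at hp
        rw [← hym] at hp; exact_mod_cast hp
      have hnz : ¬(zp = 0 ∧ zm = 0) := by
        rintro ⟨rfl, rfl⟩
        apply hne
        rw [← hyp, ← hym]
        norm_num
      have hge : (1:ℤ) ≤ zp + zm := by omega
      have : (1:ℝ) ≤ (zp : ℝ) + (zm : ℝ) := by exact_mod_cast hge
      rw [hyp, hym] at this
      exact this
    · rw [if_neg hz]
      exact add_nonneg (h3 κ) (h4 κ)
  have chain1 : (l0Obj A I (θ.1 - θ.2.1) : ℝ) ≤ lpObj I θ := by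
    rw [← hcnt]
    exact Finset.sum_le_sum (fun κ _ => key1 κ)
  -- chain 2 : lpObj θ ≤ l0(x)
  obtain ⟨x', hx'1, hx'0, hx'b⟩ := exists_bounded_rep hA hxF.1
  have hpm : ∀ a : ℝ, max a 0 - max (-a) 0 = a := by
    intro a
    rcases le_total a 0 with h | h
    · rw [max_eq_right h, max_eq_left (neg_nonneg.mpr h)]; ring
    · rw [max_eq_left h, max_eq_right (neg_nonpos.mpr h)]; ring
  have habs : ∀ a : ℝ, max a 0 + max (-a) 0 = |a| := by
    intro a
    rcases le_total a 0 with h | h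
    · rw [max_eq_right h, max_eq_left (neg_nonneg.mpr h), abs_of_nonpos h]; ring
    · rw [max_eq_left h, max_eq_right (neg_nonpos.mpr h), abs_of_nonneg h]; ring
  set θx : LPPoint m n I :=
    (fun j => max (x' j) 0, fun j => max (-x' j) 0,
     fun κ : K => max (A κ.1 ⬝ᵥ x') 0, fun κ : K => max (-(A κ.1 ⬝ᵥ x')) 0) with hθx
  have hxx : θx.1 - θx.2.1 = x' := funext fun j => hpm (x' j)
  have hθxQ : θx ∈ lpQ A k I := by
    refine ⟨fun j => le_max_right _ _, fun j => le_max_right _ _,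
      fun κ => le_max_right _ _, fun κ => le_max_right _ _, ?_, ?_, ?_⟩
    · intro κ
      rw [hxx]
      exact (hpm _).symm
    · rw [hxx]; exact hx'1
    · intro i hi
      rw [hxx]
      exact hx'0 i (hxF.2 i hi)
  have chain2 : lpObj I θx ≤ (l0Obj A I x : ℝ) := by
    rw [← hcnt x]
    apply Finset.sum_le_sum
    intro κ _
    show max (A κ.1 ⬝ᵥ x') 0 + max (-(A κ.1 ⬝ᵥ x')) 0 ≤ _
    rw [habs]
    by_cases hz : A κ.1 ⬝ᵥ x ≠ 0
    · rw [if_pos hz]; exact hx'b κ.1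
    · rw [if_neg hz]
      push_neg at hz
      rw [hx'0 κ.1 hz]
      simp
  have := le_trans chain1 (le_trans (hopt θx hθxQ) chain2)
  exact_mod_cast this
end

section
/- Let A be a totally unimodular real m×n matrix, k ∈ {1,…,m}, and I ⊆ {1,…,m} with k ∉ I. If θ* = (x₊*, x₋*, y₊*, y₋*) is an extreme point of the standard-form LP polyhedron Q that minimizes the LP objective c over Q, then x*(i) := x₊*(i) − x₋*(i) ∈ {−1, 0, 1} for every i ∈ {1,…,n}, and |A(j,:)x*| ∈ {0, 1} for every j ∈ Ī. -/
open Matrix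

namespace Helpers


lemma range_cases {a : ℝ} (h : a ∈ Set.range (SignType.cast : SignType → ℝ)) :
    a = -1 ∨ a = 0 ∨ a = 1 := by
  obtain ⟨s, rfl⟩ := h
  cases s <;> simp

lemma range_mul {a b : ℝ} (ha : a ∈ Set.range (SignType.cast : SignType → ℝ))
    (hb : b ∈ Set.range (SignType.cast : SignType → ℝ)) :
    a * b ∈ Set.range (SignType.cast : SignType → ℝ) := by
  obtain ⟨s, rfl⟩ := ha; obtain ⟨t, rfl⟩ := hb
  exact ⟨s * t, by push_cast; rfl⟩

/-- determinant of a square TU matrix is in {-1,0,1} -/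
lemma IsTotallyUnimodular.det' {ι : Type} [Fintype ι] [DecidableEq ι] {A : Matrix ι ι ℝ}
    (hA : A.IsTotallyUnimodular) : A.det ∈ Set.range (SignType.cast : SignType → ℝ) := by
  rw [Matrix.isTotallyUnimodular_iff_fintype] at hA
  simpa using hA ι id id

/-- [B | -B] is TU when B is TU. -/
lemma fromColumns_neg_isTU {ι : Type} {n : ℕ} {B : Matrix ι (Fin n) ℝ}
    (hB : B.IsTotallyUnimodular) : (fromCols B (-B)).IsTotallyUnimodular := by
  intro k f g hf hg
  set g' : Fin k → Fin n := Sum.elim id id ∘ g with hg'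
  by_cases hinj : Function.Injective g'
  · -- submatrix = (B.submatrix f g') * diagonal ε
    set ε : Fin k → ℝ := fun i => if (g i).isLeft then 1 else -1 with hε
    have hM : (fromCols B (-B)).submatrix f g = (B.submatrix f g') * Matrix.diagonal ε := by
      ext i j
      rw [Matrix.mul_diagonal]
      rcases hgj : g j with c | c <;>
        simp [hε, hg', Matrix.submatrix_apply, hgj, Matrix.fromCols_apply_inl,
          Matrix.fromCols_apply_inr, mul_comm]
    rw [hM, Matrix.det_mul, Matrix.det_diagonal]
    apply range_mul (hB k f g' hf hinj)
    have : ∀ i, ε i ∈ Set.range (SignType.cast : SignType → ℝ) := by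
      intro i; rcases h : (g i).isLeft <;> simp [hε, h]
      exacts [⟨-1, by simp⟩, ⟨1, by simp⟩]
    -- product of signs is a sign
    classical
    induction' (Finset.univ : Finset (Fin k)) using Finset.induction with a s ha ih
    · exact ⟨1, by simp⟩
    · rw [Finset.prod_insert ha]; exact range_mul (this a) ih
  · -- two columns are negatives of each other
    obtain ⟨i, j, hij, hne⟩ : ∃ i j, g' i = g' j ∧ i ≠ j := by
      simp only [Function.Injective] at hinj
      push_neg at hinj
      obtain ⟨i, j, h1, h2⟩ := hinj
      exact ⟨i, j, h1, h2⟩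
    refine ⟨0, ?_⟩
    have hcols : ∀ r, (fromCols B (-B)).submatrix f g r j =
        -(fromCols B (-B)).submatrix f g r i := by
      intro r
      rcases hgi : g i with c | c <;> rcases hgj : g j with d | d <;>
        simp only [hg', Function.comp_apply, hgi, hgj, Sum.elim_inl, Sum.elim_inr, id] at hij <;>
        subst hij <;>
        simp_all [Matrix.submatrix_apply, hgi, hgj] <;>
        exact absurd (hg (hgi ▸ hgj ▸ rfl)) hne
    symm
    have := Matrix.det_updateCol_smul ((fromCols B (-B)).submatrix f g) j (-1)
      (fun r => (fromCols B (-B)).submatrix f g r i)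
    rw [show ((fromCols B (-B)).submatrix f g).updateCol j
        ((-1 : ℝ) • fun r => (fromCols B (-B)).submatrix f g r i) =
        (fromCols B (-B)).submatrix f g from ?_] at this
    · rw [this]
      have : (((fromCols B (-B)).submatrix f g).updateCol j
          fun r => (fromCols B (-B)).submatrix f g r i).det = 0 := by
        apply Matrix.det_zero_of_column_eq hne
        intro r
        rw [Matrix.updateCol_apply, Matrix.updateCol_apply]
        simp [hne.symm]
      rw [this]; simp
    · ext r c
      rw [Matrix.updateCol_apply]
      split
      · next h => subst h; simpa using (hcols r).symm
      · rfl



lemma exists_rows {ρ σ : Type} [Fintype ρ] [Fintype σ] [DecidableEq ρ] [DecidableEq σ]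
    (N : Matrix ρ σ ℝ) (hN : ∀ w : σ → ℝ, N *ᵥ w = 0 → w = 0) :
    ∃ f : σ → ρ, Function.Injective f ∧ IsUnit (N.submatrix f id) := by
  classical
  -- rank N = card σ
  have hker : LinearMap.ker N.mulVecLin = ⊥ := by
    rw [LinearMap.ker_eq_bot']
    intro w hw
    exact hN w hw
  have hrank : N.rank = Fintype.card σ := by
    have := LinearMap.finrank_range_add_finrank_ker N.mulVecLin
    rw [hker, finrank_bot, add_zero, Module.finrank_fintype_fun_eq_card] at this
    exact this
  -- row space has dimension card σ
  have hrow : Module.finrank ℝ (Submodule.span ℝ (Set.range N)) = Fintype.card σ := by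
    have h1 : Nᵀ.rank = Fintype.card σ := by rw [Matrix.rank_transpose, hrank]
    have h2 := Matrix.rank_eq_finrank_span_cols Nᵀ
    rw [h1, Matrix.col, Matrix.transpose_transpose] at h2
    exact h2.symm
  -- pick an independent subset of the rows spanning the row space
  obtain ⟨b, hbsub, hbspan, hbind⟩ := exists_linearIndependent ℝ (Set.range N)
  have hbfin : b.Finite := Set.Finite.subset (Set.finite_range N) hbsub
  haveI : Fintype b := hbfin.fintype
  have hbcard : b.toFinset.card = Fintype.card σ := by
    rw [← finrank_span_set_eq_card hbind, hbspan, hrow]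
  have hcardb : Fintype.card b = Fintype.card σ := by
    rw [← Set.toFinset_card, hbcard]
  -- build f
  have pick : ∀ x : b, ∃ p : ρ, N p = (x : σ → ℝ) := fun x => hbsub x.2
  choose pk hpk using pick
  obtain ⟨e⟩ : Nonempty (σ ≃ b) := ⟨Fintype.equivOfCardEq hcardb.symm⟩
  refine ⟨pk ∘ e, ?_, ?_⟩
  · intro q q' h
    apply e.injective
    have : ((e q : σ → ℝ)) = ((e q' : σ → ℝ)) := by
      rw [← hpk (e q), ← hpk (e q')]; exact congrArg N h
    exact Subtype.ext this
  · rw [← Matrix.linearIndependent_rows_iff_isUnit]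
    have : (fun q => N.submatrix (pk ∘ e) id q) = fun q => ((e q : σ → ℝ)) := by
      funext q
      ext c
      simp [Matrix.submatrix_apply, ← hpk (e q)]
    rw [Matrix.row, show N.submatrix (pk ∘ e) id = fun q => ((e q : σ → ℝ)) from this]
    exact hbind.comp e e.injective

lemma tu_det {ι : Type} [Fintype ι] [DecidableEq ι] {A : Matrix ι ι ℝ}
    (hA : A.IsTotallyUnimodular) : A.det ∈ Set.range (SignType.cast : SignType → ℝ) := by
  rw [Matrix.isTotallyUnimodular_iff_fintype] at hA
  simpa using hA ι id id


lemma key {ρ κ : Type} [Fintype ρ] [Fintype κ] [DecidableEq ρ] [DecidableEq κ]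
    (M : Matrix ρ κ ℝ) (hM : M.IsTotallyUnimodular) (p₀ : ρ) {z : κ → ℝ}
    (hz : ∀ c, 0 ≤ z c) (heq : M *ᵥ z = Pi.single p₀ 1)
    (hind : ∀ d : κ → ℝ, (∀ c, z c = 0 → d c = 0) → M *ᵥ d = 0 → d = 0) :
    ∀ c, z c ∈ ({0, 1} : Set ℝ) := by
  classical
  set S := {c : κ // z c ≠ 0} with hS
  set N : Matrix ρ S ℝ := M.submatrix id Subtype.val with hN
  have hsum : ∀ (F : κ → ℝ), (∀ c, z c = 0 → F c = 0) → ∑ s : S, F s.1 = ∑ c : κ, F c := by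
    intro F hF
    rw [← Finset.sum_filter_of_ne (p := fun c => z c ≠ 0) (s := Finset.univ)
      (f := F) (by intro c _ hFc; exact fun hzc => hFc (hF c hzc))]
    exact (Finset.sum_subtype _ (by simp) F).symm
  have hNind : ∀ w : S → ℝ, N *ᵥ w = 0 → w = 0 := by
    intro w hw
    set d : κ → ℝ := fun c => if h : z c = 0 then 0 else w ⟨c, h⟩ with hd
    have hd0 : ∀ c, z c = 0 → d c = 0 := by intro c hc; simp [hd, hc]
    have hMd : M *ᵥ d = 0 := by
      funext p
      have h1 : ∑ s : S, (fun c => M p c * d c) s.1 = ∑ c : κ, M p c * d c :=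
        hsum (fun c => M p c * d c) (fun c hc => by
          show M p c * d c = 0
          rw [hd0 c hc, mul_zero])
      have h2 : (N *ᵥ w) p = (0 : ρ → ℝ) p := by rw [hw]
      simp only [Matrix.mulVec, dotProduct] at h2 ⊢
      rw [← h1, ← h2]
      apply Finset.sum_congr rfl
      intro s _
      simp [hd, hN, s.2]
    have hdz := hind d hd0 hMd
    funext s
    have : d s.1 = 0 := by rw [hdz]; rfl
    simpa [hd, s.2] using this
  obtain ⟨f, hf, hU⟩ := exists_rows N hNind
  set T : Matrix S S ℝ := N.submatrix f id with hT
  have hdetU : IsUnit T.det := (Matrix.isUnit_iff_isUnit_det T).mp hU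
  have hTU : T.IsTotallyUnimodular := by
    rw [hT, hN, Matrix.submatrix_submatrix]
    exact hM.submatrix _ _
  have hdet : T.det = 1 ∨ T.det = -1 := by
    rcases range_cases (tu_det hTU) with h | h | h
    · right; exact h
    · exact absurd (h ▸ hdetU) (by simp)
    · left; exact h
  set zS : S → ℝ := fun s => z s.1 with hzS
  set v : S → ℝ := fun p => if f p = p₀ then (1:ℝ) else 0 with hv
  have hTz : T *ᵥ zS = v := by
    funext p
    have h1 : ∑ s : S, (fun c => M (f p) c * z c) s.1 = ∑ c : κ, M (f p) c * z c :=
      hsum (fun c => M (f p) c * z c) (fun c hc => by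
        show M (f p) c * z c = 0
        rw [hc, mul_zero])
    have h2 : (M *ᵥ z) (f p) = (Pi.single p₀ 1 : ρ → ℝ) (f p) := by rw [heq]
    simp only [Matrix.mulVec, dotProduct] at h2 ⊢
    rw [hv]
    show ∑ s : S, T p s * zS s = _
    have h3 : ∑ s : S, T p s * zS s = ∑ s : S, (fun c => M (f p) c * z c) s.1 := rfl
    rw [h3, h1, h2, Pi.single_apply]
  have hzSeq : zS = T⁻¹ *ᵥ v := by
    rw [← hTz, Matrix.mulVec_mulVec, Matrix.nonsing_inv_mul T hdetU, Matrix.one_mulVec]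
  have hinvE : ∀ s p, T⁻¹ s p ∈ Set.range (SignType.cast : SignType → ℝ) := by
    intro s p
    rw [Matrix.inv_def, Matrix.smul_apply, smul_eq_mul]
    apply range_mul
    · rcases hdet with h | h <;> rw [h, Ring.inverse_eq_inv']
      · exact ⟨1, by norm_num⟩
      · exact ⟨-1, by norm_num⟩
    · rw [Matrix.adjugate_apply]
      have hrw : T.updateRow p (Pi.single s 1) =
          (fromRows M (1 : Matrix κ κ ℝ)).submatrix
            (fun q => if q = p then Sum.inr (s.1) else Sum.inl (f q)) Subtype.val := by
        ext q t
        rw [Matrix.updateRow_apply]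
        by_cases hq : q = p
        · subst hq
          rw [if_pos rfl, Matrix.submatrix_apply]
          rw [if_pos rfl, Matrix.fromRows_apply_inr, Matrix.one_apply, Pi.single_apply]
          by_cases h : t = s
          · subst h; simp
          · rw [if_neg h, if_neg (fun hh => h (Subtype.ext hh.symm))]
        · simp [hq, hT, hN]
      rw [hrw]
      exact tu_det (Matrix.IsTotallyUnimodular.submatrix _ _ hM.fromRows_one)
  intro c
  by_cases hc : z c = 0
  · left; exact hc
  · right
    set s : S := ⟨c, hc⟩ with hs
    have hval : z c = ∑ p : S, if f p = p₀ then T⁻¹ s p else 0 := by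
      have h0 : z c = zS s := rfl
      rw [h0, hzSeq]
      simp only [Matrix.mulVec, dotProduct, hv]
      apply Finset.sum_congr rfl
      intro p _
      by_cases h : f p = p₀ <;> simp [h]
    by_cases hex : ∃ p : S, f p = p₀
    · obtain ⟨p1, hp1⟩ := hex
      have hzc : z c = T⁻¹ s p1 := by
        rw [hval]
        rw [Finset.sum_eq_single_of_mem p1 (Finset.mem_univ _)]
        · rw [if_pos hp1]
        · intro p _ hne
          rw [if_neg (fun h => hne (hf (h.trans hp1.symm)))]
      rcases range_cases (hinvE s p1) with h | h | h
      · exfalso; have h0 := hz c; rw [hzc, h] at h0; linarith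
      · exact absurd (hzc.trans h) hc
      · exact hzc.trans h
    · exfalso
      apply hc
      rw [hval]
      apply Finset.sum_eq_zero
      intro p _
      rw [if_neg (fun h => hex ⟨p, h⟩)]



variable {m n : ℕ}

abbrev Rho (m : ℕ) (I : Finset (Fin m)) : Type :=
  {i : Fin m // i ∉ I} ⊕ ({i : Fin m // i ∈ I} ⊕ Unit)

abbrev Kap (m n : ℕ) (I : Finset (Fin m)) : Type :=
  (Fin n ⊕ Fin n) ⊕ ({i : Fin m // i ∉ I} ⊕ {i : Fin m // i ∉ I})

def rmap (k : Fin m) (I : Finset (Fin m)) : Rho m I → Fin m :=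
  Sum.elim Subtype.val (Sum.elim Subtype.val (fun _ => k))

def Emat (m : ℕ) (I : Finset (Fin m)) :
    Matrix (Rho m I) ({i : Fin m // i ∉ I} ⊕ {i : Fin m // i ∉ I}) ℝ :=
  fun p => Sum.elim (fun j => if p = Sum.inl j then -1 else 0)
    (fun j => if p = Sum.inl j then 1 else 0)

def bigM (A : Matrix (Fin m) (Fin n) ℝ) (k : Fin m) (I : Finset (Fin m)) :
    Matrix (Rho m I) (Kap m n I) ℝ :=
  fromCols
    (fromCols (A.submatrix (rmap k I) id) (-(A.submatrix (rmap k I) id)))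
    (Emat m I)

def vec {I : Finset (Fin m)} (θ : LPPoint m n I) : Kap m n I → ℝ :=
  Sum.elim (Sum.elim θ.1 θ.2.1) (Sum.elim θ.2.2.1 θ.2.2.2)

def unvec {I : Finset (Fin m)} (w : Kap m n I → ℝ) : LPPoint m n I :=
  (fun i => w (.inl (.inl i)), fun i => w (.inl (.inr i)),
   fun j => w (.inr (.inl j)), fun j => w (.inr (.inr j)))

lemma vec_unvec {I : Finset (Fin m)} (w : Kap m n I → ℝ) : vec (unvec w) = w := by
  funext c
  rcases c with (i | i) | (j | j) <;> rfl

lemma unvec_vec {I : Finset (Fin m)} (θ : LPPoint m n I) : unvec (vec θ) = θ := rfl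

-- TU of bigM

lemma bigM_TU {A : Matrix (Fin m) (Fin n) ℝ} (hA : A.IsTotallyUnimodular)
    (k : Fin m) (I : Finset (Fin m)) : (bigM A k I).IsTotallyUnimodular := by
  classical
  have h1 : (A.submatrix (rmap k I) id).IsTotallyUnimodular := hA.submatrix _ _
  have h2 := fromColumns_neg_isTU h1
  rw [← transpose_transpose (bigM A k I)]
  apply Matrix.IsTotallyUnimodular.transpose
  rw [bigM, transpose_fromCols]
  apply h2.transpose.fromRows_unitlike
  intro _ q
  rcases q with j | j
  · refine ⟨Sum.inl j, SignType.neg, funext fun p => ?_⟩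
    simp only [transpose_apply, Emat, Sum.elim_inl, Pi.single_apply, SignType.neg_eq_neg_one]
    by_cases h : p = Sum.inl j <;> simp [h]
  · refine ⟨Sum.inl j, SignType.pos, funext fun p => ?_⟩
    simp only [transpose_apply, Emat, Sum.elim_inr, Pi.single_apply, SignType.pos_eq_one]
    by_cases h : p = Sum.inl j <;> simp [h]

-- row evaluations
lemma mulVec_eval {I : Finset (Fin m)} (A : Matrix (Fin m) (Fin n) ℝ) (k : Fin m)
    (θ : LPPoint m n I) (p : Rho m I) :
    (bigM A k I *ᵥ vec θ) p =
      A (rmap k I p) ⬝ᵥ (θ.1 - θ.2.1) +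
        (Sum.elim (fun j => θ.2.2.2 j - θ.2.2.1 j) (fun _ => (0:ℝ)) p) := by
  classical
  simp only [Matrix.mulVec, dotProduct, Fintype.sum_sum_type, bigM, vec,
    fromCols_apply_inl, fromCols_apply_inr, Sum.elim_inl, Sum.elim_inr,
    Matrix.submatrix_apply, id, Matrix.neg_apply, Emat, Pi.sub_apply]
  rcases p with j | q
  · simp only [Sum.elim_inl]
    have e1 : ∀ y : {i : Fin m // i ∉ I} → ℝ,
        (∑ q : {i : Fin m // i ∉ I}, (if (Sum.inl j : Rho m I) = Sum.inl q then (-1:ℝ) else 0) * y q)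
          = -y j := by
      intro y
      rw [Finset.sum_eq_single_of_mem j (Finset.mem_univ _)]
      · simp
      · intro q _ hq; simp [Sum.inl.injEq, hq.symm]
    have e2 : ∀ y : {i : Fin m // i ∉ I} → ℝ,
        (∑ q : {i : Fin m // i ∉ I}, (if (Sum.inl j : Rho m I) = Sum.inl q then (1:ℝ) else 0) * y q)
          = y j := by
      intro y
      rw [Finset.sum_eq_single_of_mem j (Finset.mem_univ _)]
      · simp
      · intro q _ hq; simp [Sum.inl.injEq, hq.symm]
    rw [e1, e2]
    simp [mul_sub, Finset.sum_sub_distrib]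
    ring
  · simp only [Sum.elim_inr]
    have e1 : ∀ y : {i : Fin m // i ∉ I} → ℝ, ∀ c : ℝ,
        (∑ q' : {i : Fin m // i ∉ I}, (if (Sum.inr q : Rho m I) = Sum.inl q' then c else 0) * y q')
          = 0 := by
      intro y c
      apply Finset.sum_eq_zero
      intro q' _
      simp
    rw [e1, e1]
    simp [mul_sub, Finset.sum_sub_distrib]
    ring

def bvec (m : ℕ) (I : Finset (Fin m)) : Rho m I → ℝ := Sum.elim 0 (Sum.elim 0 1)

lemma bvec_eq (m : ℕ) (I : Finset (Fin m)) :
    bvec m I = Pi.single (Sum.inr (Sum.inr ()) : Rho m I) 1 := by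
  classical
  funext p
  rcases p with j | (i | u)
  · simp [bvec, Pi.single_apply]
  · simp [bvec, Pi.single_apply]
  · simp [bvec, Pi.single_apply]

lemma mem_lpQ_iff {I : Finset (Fin m)} (A : Matrix (Fin m) (Fin n) ℝ) (k : Fin m)
    (θ : LPPoint m n I) :
    θ ∈ lpQ A k I ↔ ((∀ c, 0 ≤ vec θ c) ∧ bigM A k I *ᵥ vec θ = bvec m I) := by
  constructor
  · rintro ⟨h1, h2, h3, h4, h5, h6, h7⟩
    refine ⟨?_, ?_⟩
    · intro c; rcases c with (i | i) | (j | j)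
      exacts [h1 i, h2 i, h3 j, h4 j]
    · funext p
      rw [mulVec_eval]
      rcases p with j | (i | u)
      · simp [rmap, bvec, h5 j]
      · simp [rmap, bvec, h7 i.1 i.2]
      · simp [rmap, bvec, h6]
  · rintro ⟨h1, h2⟩
    have hrow : ∀ p, (bigM A k I *ᵥ vec θ) p = bvec m I p := fun p => by rw [h2]
    refine ⟨fun i => h1 (.inl (.inl i)), fun i => h1 (.inl (.inr i)),
      fun j => h1 (.inr (.inl j)), fun j => h1 (.inr (.inr j)), ?_, ?_, ?_⟩
    · intro j
      have := hrow (Sum.inl j)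
      rw [mulVec_eval] at this
      simp [rmap, bvec] at this
      rw [dotProduct_sub]
      linarith
    · have := hrow (Sum.inr (Sum.inr ()))
      rw [mulVec_eval] at this
      simpa [rmap, bvec, dotProduct_sub] using this
    · intro i hi
      have := hrow (Sum.inr (Sum.inl ⟨i, hi⟩))
      rw [mulVec_eval] at this
      simpa [rmap, bvec, dotProduct_sub] using this


end Helpers

set_option maxHeartbeats 2000000 in
/-- If `θ* = (x₊*, x₋*, y₊*, y₋*)` is an extreme point of `Q` minimizing the LP objective,
then every entry of `x* = x₊* − x₋*` is in `{−1,0,1}` and `|A(j,:)x*| ∈ {0,1}` for `j ∈ Ī`. -/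
theorem stmt1 {m n : ℕ} (A : Matrix (Fin m) (Fin n) ℝ) (hA : A.IsTotallyUnimodular)
    (k : Fin m) (I : Finset (Fin m)) (hk : k ∉ I)
    (θ : LPPoint m n I)
    (hext : θ ∈ Set.extremePoints ℝ (lpQ A k I))
    (hopt : ∀ θ' ∈ lpQ A k I, lpObj I θ ≤ lpObj I θ') :
    (∀ i : Fin n, θ.1 i - θ.2.1 i ∈ ({-1, 0, 1} : Set ℝ)) ∧
      ∀ j : {i : Fin m // i ∉ I}, |A j.1 ⬝ᵥ (θ.1 - θ.2.1)| ∈ ({0, 1} : Set ℝ) := by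
  classical
  have hQ0 := hext.1
  have hQ := (Helpers.mem_lpQ_iff A k θ).mp hQ0
  set z := Helpers.vec θ with hzdef
  set M := Helpers.bigM A k I with hMdef
  set p₀ : Helpers.Rho m I := Sum.inr (Sum.inr ()) with hp₀
  have hMTU := Helpers.bigM_TU hA k I
  have hz : ∀ c, 0 ≤ z c := hQ.1
  have heq : M *ᵥ z = Pi.single p₀ 1 := by
    rw [hQ.2, Helpers.bvec_eq]
  have hind : ∀ d : Helpers.Kap m n I → ℝ,
      (∀ c, z c = 0 → d c = 0) → M *ᵥ d = 0 → d = 0 := by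
    intro d hd0 hMd
    by_contra hdne
    have hTne : (Finset.univ.filter (fun c => d c ≠ 0)).Nonempty := by
      rcases Function.ne_iff.mp hdne with ⟨c, hc⟩
      exact ⟨c, Finset.mem_filter.mpr ⟨Finset.mem_univ _, hc⟩⟩
    set T := Finset.univ.filter (fun c => d c ≠ 0) with hTdef
    set ε := T.inf' hTne (fun c => z c / |d c|) with hεdef
    have hεpos : 0 < ε := by
      rw [hεdef, Finset.lt_inf'_iff]
      intro c hc
      have hdc : d c ≠ 0 := (Finset.mem_filter.mp hc).2
      have hzc : z c ≠ 0 := fun h => hdc (hd0 c h)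
      exact div_pos (lt_of_le_of_ne (hz c) (Ne.symm hzc)) (abs_pos.mpr hdc)
    have hbound : ∀ c, |ε * d c| ≤ z c := by
      intro c
      by_cases hdc : d c = 0
      · simpa [hdc] using hz c
      · have hcT : c ∈ T := Finset.mem_filter.mpr ⟨Finset.mem_univ c, hdc⟩
        have h1 : ε ≤ z c / |d c| := Finset.inf'_le (fun c => z c / |d c|) hcT
        rw [abs_mul, abs_of_pos hεpos, ← le_div_iff₀ (abs_pos.mpr hdc)]
        exact h1
    set θ₁ := Helpers.unvec (z + ε • d) with hθ₁
    set θ₂ := Helpers.unvec (z - ε • d) with hθ₂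
    have hm1 : θ₁ ∈ lpQ A k I := by
      rw [Helpers.mem_lpQ_iff, Helpers.vec_unvec]
      refine ⟨?_, ?_⟩
      · intro c
        have h := (abs_le.mp (hbound c)).1
        simp only [Pi.add_apply, Pi.smul_apply, smul_eq_mul]
        linarith
      · rw [Matrix.mulVec_add, Matrix.mulVec_smul, hMd, smul_zero, add_zero, hQ.2]
    have hm2 : θ₂ ∈ lpQ A k I := by
      rw [Helpers.mem_lpQ_iff, Helpers.vec_unvec]
      refine ⟨?_, ?_⟩
      · intro c
        have h := (abs_le.mp (hbound c)).2
        simp only [Pi.sub_apply, Pi.smul_apply, smul_eq_mul]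
        linarith
      · rw [Matrix.mulVec_sub, Matrix.mulVec_smul, hMd, smul_zero, sub_zero, hQ.2]
    have hseg : θ ∈ openSegment ℝ θ₁ θ₂ := by
      refine ⟨1/2, 1/2, by norm_num, by norm_num, by norm_num, ?_⟩
      have hcomb : (1/2:ℝ) • θ₁ + (1/2:ℝ) • θ₂ =
          Helpers.unvec ((1/2:ℝ) • (z + ε • d) + (1/2:ℝ) • (z - ε • d)) := rfl
      rw [hcomb]
      have h2 : ((1/2:ℝ) • (z + ε • d) + (1/2:ℝ) • (z - ε • d)) = z := by
        funext c
        simp only [Pi.add_apply, Pi.smul_apply, Pi.sub_apply, smul_eq_mul]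
        ring
      rw [h2, hzdef]
      exact Helpers.unvec_vec θ
    obtain ⟨h1, -⟩ := (mem_extremePoints.mp hext).2 _ hm1 _ hm2 hseg
    have hveq := congrArg Helpers.vec h1
    rw [Helpers.vec_unvec, ← hzdef] at hveq
    have hd : ε • d = 0 := by
      funext c
      have := congrFun hveq c
      simp only [Pi.add_apply] at this
      simpa using (by linarith : z c + (ε • d) c = z c + 0)
    rcases smul_eq_zero.mp hd with h | h
    · exact absurd h (ne_of_gt hεpos)
    · exact hdne h
  have hall := Helpers.key M hMTU p₀ hz heq hind
  obtain ⟨-, -, -, -, hy, -, -⟩ := hQ0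
  constructor
  · intro i
    have h1 := hall (Sum.inl (Sum.inl i))
    have h2 := hall (Sum.inl (Sum.inr i))
    have e1 : z (Sum.inl (Sum.inl i)) = θ.1 i := rfl
    have e2 : z (Sum.inl (Sum.inr i)) = θ.2.1 i := rfl
    rw [e1] at h1; rw [e2] at h2
    simp only [Set.mem_insert_iff, Set.mem_singleton_iff] at h1 h2 ⊢
    rcases h1 with h1 | h1 <;> rcases h2 with h2 | h2 <;> rw [h1, h2] <;> norm_num
  · intro j
    have h1 := hall (Sum.inr (Sum.inl j))
    have h2 := hall (Sum.inr (Sum.inr j))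
    have e1 : z (Sum.inr (Sum.inl j)) = θ.2.2.1 j := rfl
    have e2 : z (Sum.inr (Sum.inr j)) = θ.2.2.2 j := rfl
    rw [e1] at h1; rw [e2] at h2
    rw [hy j]
    simp only [Set.mem_insert_iff, Set.mem_singleton_iff] at h1 h2 ⊢
    rcases h1 with h1 | h1 <;> rcases h2 with h2 | h2 <;> rw [h1, h2] <;> norm_num
end

section
/- Let A be a totally unimodular real m×n matrix, k ∈ {1,…,m}, and I ⊆ {1,…,m} with k ∉ I. Then every extreme point (x₊, x₋, y₊, y₋) of the standard-form LP polyhedron Q has all of its coordinates in {0, 1}. -/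
open Matrix

lemma signRange_iff (x : ℝ) : x ∈ Set.range (SignType.cast : SignType → ℝ) ↔
    x = 0 ∨ x = 1 ∨ x = -1 := by
  constructor
  · rintro ⟨s, rfl⟩
    cases s <;> simp
  · rintro (rfl | rfl | rfl)
    exacts [⟨0, rfl⟩, ⟨1, rfl⟩, ⟨-1, by simp⟩]

/-- Sign-scaled column selection of a TU matrix is TU. -/
lemma tu_colSign {X Y Z : Type*} {B : Matrix X Y ℝ} (hB : B.IsTotallyUnimodular)
    (g : Z → Y) (ε : Z → ℝ) (hε : ∀ z, ε z = 1 ∨ ε z = -1) :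
    (Matrix.of fun i z => ε z * B i (g z)).IsTotallyUnimodular := by
  rw [isTotallyUnimodular_iff]
  intro k f g'
  have hdet : ((Matrix.of fun i z => ε z * B i (g z)).submatrix f g').det
      = (∏ x : Fin k, ε (g' x)) * (B.submatrix f (g ∘ g')).det := by
    rw [← det_mul_row]
    rfl
  have hprod : (∏ x : Fin k, ε (g' x)) = 1 ∨ (∏ x : Fin k, ε (g' x)) = -1 := by
    refine Finset.prod_induction _ (fun r => r = 1 ∨ r = -1) ?_ (Or.inl rfl) ?_
    · rintro a b (rfl | rfl) (rfl | rfl) <;> simp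
    · intro x _; exact hε (g' x)
  rw [isTotallyUnimodular_iff] at hB
  obtain ⟨s, hs⟩ := hB k f (g ∘ g')
  rw [hdet, ← hs]
  rcases hprod with h | h <;> rw [h]
  · exact ⟨s, by simp⟩
  · exact ⟨-s, by simp⟩

open Classical in
/-- Key lemma: if the augmented matrix `[M | b]` is TU, `M v = b`, and the columns of `M`
on the support of `v` are linearly independent, then all entries of `v` lie in `{-1,0,1}`. -/
lemma key_entries {ρ γ : Type*} [Fintype ρ] [Fintype γ] [DecidableEq ρ] [DecidableEq γ]
    (M : Matrix ρ γ ℝ) (b : ρ → ℝ)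
    (hTU : (fromCols M (Matrix.of fun i (_ : Unit) => b i)).IsTotallyUnimodular)
    (v : γ → ℝ) (hv : M *ᵥ v = b)
    (hind : ∀ d : γ → ℝ, (∀ x, v x = 0 → d x = 0) → M *ᵥ d = 0 → d = 0) :
    ∀ x, v x = 0 ∨ v x = 1 ∨ v x = -1 := by
  -- the support
  set s := {x : γ // v x ≠ 0} with hs
  set M' : Matrix ρ s ℝ := M.submatrix id Subtype.val with hM'
  set v' : s → ℝ := fun x => v x.1 with hv'def
  -- restricted sums agree with full sums
  have hsum : ∀ (w : γ → ℝ) (c : s → ℝ), (∀ x : s, c x = w x.1) →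
      (∀ x : γ, v x = 0 → w x = 0) → ∀ i : ρ, ∑ x : s, M i x.1 * c x = ∑ x : γ, M i x * w x := by
    intro w c hc hw i
    rw [show (∑ x : s, M i x.1 * c x) = ∑ x : s, M i x.1 * w x.1 by
      exact Finset.sum_congr rfl fun x _ => by rw [hc]]
    rw [← Finset.sum_subtype (Finset.univ.filter (fun x => v x ≠ 0))
      (by simp) (fun x => M i x * w x)]
    apply Finset.sum_filter_of_ne
    intro x _ hx hvx
    exact hx (by rw [hw x hvx, mul_zero])
  have hv' : M' *ᵥ v' = b := by
    funext i
    rw [← hv]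
    exact hsum v v' (fun _ => rfl) (fun x hx => hx) i
  -- linear independence of the support columns
  have hli : LinearIndependent ℝ M'ᵀ.row := by
    rw [Fintype.linearIndependent_iff]
    intro c hc x
    set d : γ → ℝ := fun y => if h : v y ≠ 0 then c ⟨y, h⟩ else 0 with hd
    have hd0 : ∀ y, v y = 0 → d y = 0 := fun y hy => by simp [hd, hy]
    have hMd : M *ᵥ d = 0 := by
      funext i
      have h1 := hsum d c (fun x => by simp [hd, x.2]) hd0 i
      have h2 := congrFun hc i
      simp only [Finset.sum_apply, Pi.smul_apply, smul_eq_mul, Pi.zero_apply,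
        transpose_apply, submatrix_apply, id_eq] at h2
      rw [mulVec, dotProduct, ← h1, Pi.zero_apply,
        show (∑ x : s, M i x.1 * c x) = ∑ x : s, c x * M i x.1 from
          Finset.sum_congr rfl fun x _ => mul_comm _ _]
      exact h2
    have := hind d hd0 hMd
    have := congrFun this x.1
    simpa [hd, x.2] using this
  -- the rows of M' span everything
  have hspan : Submodule.span ℝ (Set.range M'.row) = ⊤ := by
    apply Submodule.eq_top_of_finrank_eq
    have h1 : M'.rank = Fintype.card s := by
      have := hli.rank_matrix
      rwa [rank_transpose] at this
    have := (rank_eq_finrank_span_row M').symm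
    rw [h1] at this
    rw [this, Module.finrank_pi]
  obtain ⟨B, hBsub, hBspan, hBli⟩ := exists_linearIndependent ℝ (Set.range M'.row)
  rw [hspan] at hBspan
  have hBfin : B.Finite := hBli.finite
  have : Fintype B := hBfin.fintype
  have hBbasis : Module.Basis B ℝ (s → ℝ) := Module.Basis.mk hBli (by rw [Subtype.range_coe, hBspan])
  have hcard : Fintype.card B = Fintype.card s := by
    rw [← Module.finrank_pi (R := ℝ) (ι := s), Module.finrank_eq_card_basis hBbasis]
  have e : B ≃ s := Fintype.equivOfCardEq hcard
  -- choose row indices realizing the basis vectors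
  have hrow : ∀ w : B, ∃ i : ρ, M' i = (w : s → ℝ) := fun w => hBsub w.2
  choose ι hι using hrow
  -- the square submatrix
  set f : s → ρ := fun p => ι (e.symm p) with hf
  set C : Matrix s s ℝ := M'.submatrix f id with hC
  have hCrow : ∀ p : s, C p = ((e.symm p : B) : s → ℝ) := fun p => hι (e.symm p)
  -- C has linearly independent rows, hence nonzero determinant
  have hCli : LinearIndependent ℝ C.row := by
    have : LinearIndependent ℝ (fun w : B => (w : s → ℝ)) := hBli
    have h2 : LinearIndependent ℝ (fun p : s => ((e.symm p : B) : s → ℝ)) :=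
      this.comp e.symm e.symm.injective
    have : C = fun p => ((e.symm p : B) : s → ℝ) := funext hCrow
    rwa [this]
  have hCdet : C.det ≠ 0 := by
    intro h0
    have : Cᵀ.det = 0 := by rw [det_transpose]; exact h0
    obtain ⟨g, hg0, hg⟩ := (Matrix.exists_mulVec_eq_zero_iff).2 this
    rw [Fintype.linearIndependent_iff] at hCli
    apply hg0
    funext p
    refine hCli g ?_ p
    funext x
    have := congrFun hg x
    simpa [mulVec, dotProduct, Finset.sum_apply, mul_comm] using this
  -- Cramer's rule
  set c : s → ℝ := fun p => b (f p) with hc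
  have hCv : C *ᵥ v' = c := by
    funext p
    have := congrFun hv' (f p)
    simpa [hC, mulVec, dotProduct, Matrix.submatrix] using this
  have hcramer : cramer C c = C.det • v' := by
    have h1 : C *ᵥ cramer C c = C.det • c := mulVec_cramer C c
    have h2 : C *ᵥ (C.det • v') = C.det • c := by
      rw [mulVec_smul, hCv]
    have hinj : Function.Injective (C.mulVec) :=
      (Matrix.mulVec_injective_iff_isUnit).2 ((Matrix.isUnit_iff_isUnit_det C).2
        (isUnit_iff_ne_zero.2 hCdet))
    exact hinj (h1.trans h2.symm)
  -- TU facts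
  have hTU' := (isTotallyUnimodular_iff_fintype _).1 hTU
  have hCdet_tu : C.det = 1 ∨ C.det = -1 := by
    have := hTU' s (fun p => f p) (fun x => Sum.inl x.1)
    have hCeq : (fromCols M (Matrix.of fun i (_ : Unit) => b i)).submatrix
        (fun p => f p) (fun x : s => Sum.inl x.1) = C := by
      ext p x
      simp [hC, hM', Matrix.submatrix, fromCols]
    rw [hCeq, signRange_iff] at this
    rcases this with h | h | h
    · exact absurd h hCdet
    · exact Or.inl h
    · exact Or.inr h
  have hupd : ∀ x : s, (C.updateCol x c).det = 0 ∨ (C.updateCol x c).det = 1 ∨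
      (C.updateCol x c).det = -1 := by
    intro x
    have := hTU' s (fun p => f p)
      (fun y : s => if y = x then Sum.inr () else Sum.inl y.1)
    rw [signRange_iff] at this
    have hCeq : (fromCols M (Matrix.of fun i (_ : Unit) => b i)).submatrix
        (fun p => f p) (fun y : s => if y = x then Sum.inr () else Sum.inl y.1)
        = C.updateCol x c := by
      ext p y
      by_cases hyx : y = x <;>
        simp [hyx, hC, hM', hc, Matrix.submatrix, fromCols, Matrix.updateCol_apply]
    rwa [hCeq] at this
  -- conclude
  intro x
  by_cases hx : v x = 0
  · exact Or.inl hx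
  · right
    set x' : s := ⟨x, hx⟩ with hx'
    have h1 : cramer C c x' = C.det * v x := by
      rw [hcramer]; simp [hv'def, hx']
    have h2 : cramer C c x' = (C.updateCol x' c).det := cramer_apply C c x'
    have h3 := hupd x'
    rw [← h2, h1] at h3
    rcases hCdet_tu with hd | hd <;> rw [hd] at h3 <;>
      rcases h3 with h | h | h <;> [skip; skip; skip; skip; skip; skip] <;>
      first
        | (exact absurd (by linarith) hx)
        | (left; linarith)
        | (right; linarith)

section Main

variable {m n : ℕ} (I : Finset (Fin m))

/-- Row index type of the standard-form constraint matrix. -/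
abbrev RIdx (m : ℕ) (I : Finset (Fin m)) : Type :=
  {i : Fin m // i ∉ I} ⊕ ({i : Fin m // i ∈ I} ⊕ Unit)

/-- Column index type of the standard-form constraint matrix. -/
abbrev CIdx (m n : ℕ) (I : Finset (Fin m)) : Type :=
  (Fin n ⊕ Fin n) ⊕ ({i : Fin m // i ∉ I} ⊕ {i : Fin m // i ∉ I})

variable (k : Fin m)

/-- Map a row index to the corresponding row of `A`. -/
def rmap (k : Fin m) : RIdx m I → Fin m :=
  Sum.elim Subtype.val (Sum.elim Subtype.val (fun _ => k))

/-- The standard-form constraint matrix. -/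
def bigM (A : Matrix (Fin m) (Fin n) ℝ) (k : Fin m) : Matrix (RIdx m I) (CIdx m n I) ℝ :=
  fun r => Sum.elim
    (Sum.elim (fun c => A (rmap I k r) c) (fun c => -A (rmap I k r) c))
    (Sum.elim (fun j => if r = Sum.inl j then -1 else 0)
      (fun j => if r = Sum.inl j then 1 else 0))

/-- The right-hand side. -/
def bigb : RIdx m I → ℝ := Sum.elim 0 (Sum.elim 0 1)

/-- Flatten an `LPPoint` into a single vector. -/
def pack (θ : LPPoint m n I) : CIdx m n I → ℝ :=
  Sum.elim (Sum.elim θ.1 θ.2.1) (Sum.elim θ.2.2.1 θ.2.2.2)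

/-- Unflatten. -/
def unpack (v : CIdx m n I → ℝ) : LPPoint m n I :=
  (fun c => v (Sum.inl (Sum.inl c)), fun c => v (Sum.inl (Sum.inr c)),
   fun j => v (Sum.inr (Sum.inl j)), fun j => v (Sum.inr (Sum.inr j)))

lemma unpack_pack (θ : LPPoint m n I) : unpack I (pack I θ) = θ := rfl

lemma pack_unpack (v : CIdx m n I → ℝ) : pack I (unpack I v) = v := by
  funext x
  rcases x with (c | c) | (j | j) <;> rfl

lemma mulVec_bigM (A : Matrix (Fin m) (Fin n) ℝ) (θ : LPPoint m n I)
    (r : RIdx m I) :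
    (bigM I A k *ᵥ pack I θ) r =
      A (rmap I k r) ⬝ᵥ (θ.1 - θ.2.1)
      + (Sum.elim (fun j : {i : Fin m // i ∉ I} => θ.2.2.2 j - θ.2.2.1 j) 0 r) := by
  classical
  rw [mulVec, dotProduct, Fintype.sum_sum_type, Fintype.sum_sum_type, Fintype.sum_sum_type]
  have h1 : ∑ c : Fin n, bigM I A k r (Sum.inl (Sum.inl c)) * pack I θ (Sum.inl (Sum.inl c))
      = A (rmap I k r) ⬝ᵥ θ.1 := rfl
  have h2 : ∑ c : Fin n, bigM I A k r (Sum.inl (Sum.inr c)) * pack I θ (Sum.inl (Sum.inr c))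
      = -(A (rmap I k r) ⬝ᵥ θ.2.1) := by
    rw [dotProduct, ← Finset.sum_neg_distrib]
    exact Finset.sum_congr rfl fun c _ => by simp [bigM, pack]
  have h3 : ∑ j : {i : Fin m // i ∉ I},
      bigM I A k r (Sum.inr (Sum.inl j)) * pack I θ (Sum.inr (Sum.inl j))
      = Sum.elim (fun j : {i : Fin m // i ∉ I} => -θ.2.2.1 j) 0 r := by
    rcases r with j' | r'
    · simp only [bigM, pack, Sum.elim_inl, Sum.elim_inr]
      rw [Finset.sum_eq_single j']
      · simp
      · intro j _ hj
        have hne : ¬ (Sum.inl j' : RIdx m I) = Sum.inl j := by simp [Ne.symm hj]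
        simp [hne]
      · simp
    · simp [bigM, pack]
  have h4 : ∑ j : {i : Fin m // i ∉ I},
      bigM I A k r (Sum.inr (Sum.inr j)) * pack I θ (Sum.inr (Sum.inr j))
      = Sum.elim (fun j : {i : Fin m // i ∉ I} => θ.2.2.2 j) 0 r := by
    rcases r with j' | r'
    · simp only [bigM, pack, Sum.elim_inl, Sum.elim_inr]
      rw [Finset.sum_eq_single j']
      · simp
      · intro j _ hj
        have hne : ¬ (Sum.inl j' : RIdx m I) = Sum.inl j := by simp [Ne.symm hj]
        simp [hne]
      · simp
    · simp [bigM, pack]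
  rw [h1, h2, h3, h4, dotProduct_sub]
  rcases r with j' | r' <;> simp <;> ring

lemma mem_lpQ_iff (A : Matrix (Fin m) (Fin n) ℝ) (θ : LPPoint m n I) :
    θ ∈ lpQ A k I ↔ (∀ x, 0 ≤ pack I θ x) ∧ bigM I A k *ᵥ pack I θ = bigb I := by
  constructor
  · rintro ⟨h1, h2, h3, h4, h5, h6, h7⟩
    constructor
    · rintro ((c | c) | (j | j))
      exacts [h1 c, h2 c, h3 j, h4 j]
    · funext r
      rw [mulVec_bigM]
      rcases r with j | (i | u)
      · have := h5 j
        simp [rmap, bigb, this]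
      · have := h7 i.1 i.2
        simp [rmap, bigb, this]
      · simp [rmap, bigb, h6]
  · rintro ⟨h1, h2⟩
    refine ⟨Pi.le_def.mpr fun c => h1 (Sum.inl (Sum.inl c)),
      Pi.le_def.mpr fun c => h1 (Sum.inl (Sum.inr c)),
      Pi.le_def.mpr fun j => h1 (Sum.inr (Sum.inl j)),
      Pi.le_def.mpr fun j => h1 (Sum.inr (Sum.inr j)), ?_, ?_, ?_⟩
    · intro j
      have := congrFun h2 (Sum.inl j)
      rw [mulVec_bigM] at this
      simp only [bigb, Sum.elim_inl, rmap, Pi.zero_apply] at this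
      linarith
    · have := congrFun h2 (Sum.inr (Sum.inr ()))
      rw [mulVec_bigM] at this
      simpa [bigb, rmap] using this
    · intro i hi
      have := congrFun h2 (Sum.inr (Sum.inl ⟨i, hi⟩))
      rw [mulVec_bigM] at this
      simpa [bigb, rmap] using this

end Main


/-- Every extreme point `(x₊, x₋, y₊, y₋)` of the standard-form LP polyhedron `Q`
has all of its coordinates in `{0, 1}`. -/
theorem stmt2 {m n : ℕ} (A : Matrix (Fin m) (Fin n) ℝ) (hA : A.IsTotallyUnimodular)
    (k : Fin m) (I : Finset (Fin m)) (hk : k ∉ I)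
    (θ : LPPoint m n I)
    (hext : θ ∈ Set.extremePoints ℝ (lpQ A k I)) :
    (∀ i : Fin n, θ.1 i ∈ ({0, 1} : Set ℝ)) ∧
      (∀ i : Fin n, θ.2.1 i ∈ ({0, 1} : Set ℝ)) ∧
      (∀ j : {i : Fin m // i ∉ I}, θ.2.2.1 j ∈ ({0, 1} : Set ℝ)) ∧
      (∀ j : {i : Fin m // i ∉ I}, θ.2.2.2 j ∈ ({0, 1} : Set ℝ)) := by

  classical
  have hθQ := hext.1
  rw [mem_lpQ_iff I k A θ] at hθQ
  obtain ⟨hpos, hMv⟩ := hθQ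
  -- total unimodularity of the augmented matrix
  set D : Matrix (RIdx m I) (Fin n ⊕ RIdx m I) ℝ :=
    fromCols (A.submatrix (rmap I k) id) (1 : Matrix (RIdx m I) (RIdx m I) ℝ) with hD
  have hDtu : D.IsTotallyUnimodular :=
    (hA.submatrix (rmap I k) id).fromCols_one
  set g : (CIdx m n I ⊕ Unit) → (Fin n ⊕ RIdx m I) :=
    Sum.elim (Sum.elim (Sum.elim Sum.inl Sum.inl)
      (Sum.elim (fun j => Sum.inr (Sum.inl j)) (fun j => Sum.inr (Sum.inl j))))
      (fun _ => Sum.inr (Sum.inr (Sum.inr ()))) with hg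
  set ε : (CIdx m n I ⊕ Unit) → ℝ :=
    Sum.elim (Sum.elim (Sum.elim 1 (-1)) (Sum.elim (-1) 1)) 1 with hgε
  have hε : ∀ z, ε z = 1 ∨ ε z = -1 := by
    rintro ((( c | c) | (j | j)) | u) <;> simp [hgε]
  have hTUaug : (fromCols (bigM I A k)
      (Matrix.of fun i (_ : Unit) => bigb I i)).IsTotallyUnimodular := by
    have htu := tu_colSign hDtu g ε hε
    have heq : (fromCols (bigM I A k) (Matrix.of fun i (_ : Unit) => bigb I i))
        = Matrix.of fun i z => ε z * D i (g z) := by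
      ext r z
      rcases z with ((c | c) | (j | j)) | u <;>
        rcases r with j' | (i' | u') <;>
          simp [hD, hg, hgε, bigM, bigb, fromCols, Matrix.one_apply, rmap]
    rw [heq]
    exact htu
  -- support independence from extremality
  have hind : ∀ d : CIdx m n I → ℝ, (∀ x, pack I θ x = 0 → d x = 0) →
      bigM I A k *ᵥ d = 0 → d = 0 := by
    intro d hd0 hMd
    by_contra hdne
    set T := Finset.univ.filter (fun x => d x ≠ 0) with hT
    have hTne : T.Nonempty := by
      rcases Function.ne_iff.mp hdne with ⟨x, hx⟩
      refine ⟨x, ?_⟩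
      simp only [hT, Finset.mem_filter, Finset.mem_univ, true_and]
      simpa using hx
    set δ := T.inf' hTne (fun x => pack I θ x / |d x|) with hδ
    have hδpos : 0 < δ := by
      rw [hδ, Finset.lt_inf'_iff]
      intro x hx
      have hdx : d x ≠ 0 := by simpa [hT] using hx
      have h1 : pack I θ x ≠ 0 := fun h => hdx (hd0 x h)
      exact div_pos (lt_of_le_of_ne (hpos x) (Ne.symm h1)) (abs_pos.mpr hdx)
    have hbound : ∀ x, |δ * d x| ≤ pack I θ x := by
      intro x
      by_cases hdx : d x = 0
      · simpa [hdx] using hpos x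
      · have hxT : x ∈ T := by simp [hT, hdx]
        have hle := Finset.inf'_le (fun x => pack I θ x / |d x|) hxT
        rw [abs_mul, abs_of_pos hδpos]
        calc δ * |d x| ≤ (pack I θ x / |d x|) * |d x| :=
              mul_le_mul_of_nonneg_right hle (abs_nonneg _)
          _ = pack I θ x := div_mul_cancel₀ _ (abs_ne_zero.mpr hdx)
    set θ₁ := unpack I (pack I θ + δ • d) with hθ₁
    set θ₂ := unpack I (pack I θ - δ • d) with hθ₂
    have h₁Q : θ₁ ∈ lpQ A k I := by
      rw [mem_lpQ_iff I k A, hθ₁, pack_unpack]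
      refine ⟨fun x => ?_, ?_⟩
      · have h1 := (abs_le.mp (hbound x)).1
        simp only [Pi.add_apply, Pi.smul_apply, smul_eq_mul]
        linarith
      · rw [mulVec_add, mulVec_smul, hMd, hMv, smul_zero, add_zero]
    have h₂Q : θ₂ ∈ lpQ A k I := by
      rw [mem_lpQ_iff I k A, hθ₂, pack_unpack]
      refine ⟨fun x => ?_, ?_⟩
      · have h1 := (abs_le.mp (hbound x)).2
        simp only [Pi.sub_apply, Pi.smul_apply, smul_eq_mul]
        linarith
      · rw [mulVec_sub, mulVec_smul, hMd, hMv, smul_zero, sub_zero]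
    have hpackinj : ∀ a b : LPPoint m n I, pack I a = pack I b → a = b := by
      intro a b h
      have h2 := congrArg (unpack I) h
      rwa [unpack_pack, unpack_pack] at h2
    have hseg : θ ∈ openSegment ℝ θ₁ θ₂ := by
      refine ⟨1/2, 1/2, by norm_num, by norm_num, by norm_num, ?_⟩
      apply hpackinj
      funext x
      rcases x with (c | c) | (j | j) <;>
        simp [hθ₁, hθ₂, pack, unpack, Prod.smul_def, Prod.add_def] <;> ring
    obtain ⟨hθ₁eq, -⟩ := (mem_extremePoints.1 hext).2 _ h₁Q _ h₂Q hseg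
    have : pack I θ + δ • d = pack I θ := by
      rw [← pack_unpack I (pack I θ + δ • d), ← hθ₁, hθ₁eq]
    have hd' : δ • d = 0 := by
      have := congrArg (fun u => u - pack I θ) this
      simpa [add_sub_cancel_left] using this
    exact hdne (by
      have := smul_eq_zero.mp hd'
      rcases this with h | h
      · exact absurd h (ne_of_gt hδpos)
      · exact h)
  -- apply the key lemma
  have hvals := key_entries (bigM I A k) (bigb I) hTUaug (pack I θ) hMv hind
  have hval01 : ∀ x, pack I θ x = 0 ∨ pack I θ x = 1 := by
    intro x
    rcases hvals x with h | h | h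
    · exact Or.inl h
    · exact Or.inr h
    · exfalso; have := hpos x; rw [h] at this; linarith
  refine ⟨fun i => ?_, fun i => ?_, fun j => ?_, fun j => ?_⟩ <;>
    simp only [Set.mem_insert_iff, Set.mem_singleton_iff]
  · exact hval01 (Sum.inl (Sum.inl i))
  · exact hval01 (Sum.inl (Sum.inr i))
  · exact hval01 (Sum.inr (Sum.inl j))
  · exact hval01 (Sum.inr (Sum.inr j))
end

section
/- Let A be a totally unimodular real m×n matrix, k ∈ {1,…,m}, and I ⊆ {1,…,m} with k ∉ I, and suppose the feasible set F is nonempty. Then there exists x* ∈ F such that: (i) x* minimizes the l0 objective ‖A(Ī,:)x‖₀ over F; (ii) x* minimizes the l1 objective ‖A(Ī,:)x‖₁ over F (in particular the l1 minimum over F is attained); (iii) every entry of A x* lies in {−1, 0, 1}; and (iv) the minimum value of the l1 objective over F equals the minimum value of the l0 objective over F. -/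
open Matrix

/-- The l1 objective `‖A(Ī,:)x‖₁ = Σ_{i∈Ī} |A(i,:)x|`. -/
noncomputable def l1Obj {m n : ℕ} (A : Matrix (Fin m) (Fin n) ℝ) (I : Finset (Fin m))
    (x : Fin n → ℝ) : ℝ :=
  ∑ i ∈ Iᶜ, |A i ⬝ᵥ x|

/-- dot product with a fixed row, as a linear functional; linear in the row. -/
noncomputable def rowFun (n : ℕ) : (Fin n → ℝ) →ₗ[ℝ] ((Fin n → ℝ) →ₗ[ℝ] ℝ) where
  toFun v :=
    { toFun := fun x => v ⬝ᵥ x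
      map_add' := fun a b => dotProduct_add v a b
      map_smul' := fun c a => by simp }
  map_add' u v := by ext x; simp [add_dotProduct]
  map_smul' c v := by ext x; simp [smul_dotProduct]

@[simp] lemma rowFun_apply {n : ℕ} (v x : Fin n → ℝ) : rowFun n v x = v ⬝ᵥ x := rfl

/-- If the rows of a matrix are linearly independent, one can select columns so that
the resulting square submatrix is invertible. -/
lemma exists_good_cols {ι : Type} [Fintype ι] [DecidableEq ι] {n : ℕ}
    (R : Matrix ι (Fin n) ℝ) (h : LinearIndependent ℝ (fun i => R i)) :
    ∃ g : ι → Fin n, Function.Injective g ∧ IsUnit (R.submatrix id g) := by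
  classical
  have hrank : R.rank = Fintype.card ι := by
    have h1 : Rᵀ.rank = Fintype.card ι := by
      rw [Matrix.rank_eq_finrank_span_cols, Matrix.col_transpose]
      exact finrank_span_eq_card h
    rw [← Matrix.rank_transpose]; exact h1
  have hsp : Submodule.span ℝ (Set.range Rᵀ) = ⊤ := by
    apply Submodule.eq_top_of_finrank_eq
    rw [show Set.range Rᵀ = Set.range R.col from rfl, ← Matrix.rank_eq_finrank_span_cols, hrank, Module.finrank_fintype_fun_eq_card]
  obtain ⟨b, hbsub, hbspan, hbind⟩ := exists_linearIndependent ℝ (Set.range Rᵀ)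
  rw [hsp] at hbspan
  haveI : Fintype ↥b := (hbind.setFinite).fintype
  have hbas : Module.Basis ↥b ℝ (ι → ℝ) := Module.Basis.mk hbind (by rw [Subtype.range_coe, hbspan])
  have hcard : Fintype.card ι = Fintype.card ↥b := by
    rw [← Module.finrank_fintype_fun_eq_card (R := ℝ) (η := ι),
      Module.finrank_eq_card_basis hbas]
  let e : ι ≃ ↥b := Fintype.equivOfCardEq hcard
  have hg0 : ∀ w : ↥b, ∃ t : Fin n, Rᵀ t = (w : ι → ℝ) := fun w => hbsub w.2
  choose g0 hg0spec using hg0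
  have hg0inj : Function.Injective g0 := by
    intro w1 w2 h12
    apply Subtype.coe_injective
    show (w1 : ι → ℝ) = (w2 : ι → ℝ)
    rw [← hg0spec w1, ← hg0spec w2, h12]
  refine ⟨fun i => g0 (e i), hg0inj.comp e.injective, ?_⟩
  rw [← Matrix.linearIndependent_cols_iff_isUnit]
  have heq : (fun t => (R.submatrix id (fun i => g0 (e i)))ᵀ t)
      = fun t => ((e t : ↥b) : ι → ℝ) := by
    funext t
    rw [← hg0spec (e t)]
    rfl
  rw [Matrix.col_def, heq]
  exact hbind.comp e e.injective

lemma abs_add_sign {a b : ℝ} (h : |b| ≤ |a|) : |a + b| = |a| + Real.sign a * b := by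
  rcases lt_trichotomy a 0 with ha | ha | ha
  · rw [Real.sign_of_neg ha, abs_of_neg ha, abs_of_nonpos (by
      have hb : b ≤ -a := le_trans (le_abs_self b) (le_of_le_of_eq h (abs_of_neg ha))
      linarith)]
    ring
  · subst ha
    have : b = 0 := abs_nonpos_iff.mp (by simpa using h)
    simp [this]
  · rw [Real.sign_of_pos ha, abs_of_pos ha, abs_of_nonneg (by
      have hb : -b ≤ a := le_trans (neg_le_abs b) (le_of_le_of_eq h (abs_of_pos ha))
      linarith)]
    ring

/-- Key structural lemma: if `x₀` satisfies `(A x₀) k = 1` and the "elementarity" property `H`,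
then all entries of `A x₀` are in `{-1,0,1}`. -/
lemma key_tu {m n : ℕ} {A : Matrix (Fin m) (Fin n) ℝ} (hA : A.IsTotallyUnimodular)
    {k : Fin m} {x₀ : Fin n → ℝ} (hk1 : A.mulVec x₀ k = 1)
    (H : ∀ x' : Fin n → ℝ, (∀ i, A.mulVec x₀ i = 0 → A.mulVec x' i = 0) →
      ∃ c : ℝ, A.mulVec x' = c • A.mulVec x₀) (j : Fin m) :
    A.mulVec x₀ j ∈ ({-1, 0, 1} : Set ℝ) := by
  classical
  simp only [Set.mem_insert_iff, Set.mem_singleton_iff]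
  set y := A.mulVec x₀ with hy
  by_cases hyj : y j = 0
  · exact Or.inr (Or.inl hyj)
  by_cases hjk : j = k
  · subst hjk; exact Or.inr (Or.inr hk1)
  set L : Fin m → ((Fin n → ℝ) →ₗ[ℝ] ℝ) := fun i => rowFun n (A i) with hL
  have hLapp : ∀ (i : Fin m) (x : Fin n → ℝ), L i x = A.mulVec x i := fun i x => rfl
  set Z : Set (Fin m) := {i | y i = 0} with hZ
  have hkZ : k ∉ Z := by simp only [hZ, Set.mem_setOf_eq, hk1]; norm_num
  have hjZ : j ∉ Z := hyj
  -- the functional L j - y j • L k is in the span of the functionals indexed by Z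
  have hKspan : (L j - y j • L k) ∈ Submodule.span ℝ (Set.range (fun i : Z => L i)) := by
    apply mem_span_of_iInf_ker_le_ker
    intro x hx
    simp only [Submodule.mem_iInf, LinearMap.mem_ker] at hx
    have hx' : ∀ i, y i = 0 → A.mulVec x i = 0 := fun i hi => hx ⟨i, hi⟩
    obtain ⟨c, hc⟩ := H x hx'
    simp only [LinearMap.mem_ker, LinearMap.sub_apply, LinearMap.smul_apply, smul_eq_mul,
      hLapp, hc, Pi.smul_apply, ← hy, hk1]
    ring
  -- a maximal independent subfamily B of Z
  obtain ⟨B, hBind, hBmax⟩ := exists_maximal_linearIndepOn ℝ (fun i : Z => L i)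
  have himg : ((fun i : Z => L i) '' B) = Set.range (fun b : B => L ↑↑b) := Set.image_eq_range _ _
  have hKspanB : (L j - y j • L k) ∈ Submodule.span ℝ (Set.range (fun b : B => L ↑↑b)) := by
    rw [← himg]
    refine Submodule.span_le.mpr ?_ hKspan
    rintro v ⟨i, rfl⟩
    by_cases hiB : i ∈ B
    · exact Submodule.subset_span ⟨i, hiB, rfl⟩
    · obtain ⟨a, ha0, haz⟩ := hBmax i hiB
      have := Submodule.smul_mem (Submodule.span ℝ ((fun i : Z => L i) '' B)) a⁻¹ haz
      rwa [smul_smul, inv_mul_cancel₀ ha0, one_smul] at this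
  haveI : Fintype ↥B := Fintype.ofFinite _
  obtain ⟨c, hc⟩ := (Submodule.mem_span_range_iff_exists_fun ℝ).1 hKspanB
  -- L k is not in the span of the B-family
  have hnotmem : L k ∉ Submodule.span ℝ (Set.range fun b : B => L ↑↑b) := by
    intro hmem
    have hle : Submodule.span ℝ (Set.range fun b : B => L ↑↑b)
        ≤ LinearMap.ker (LinearMap.applyₗ x₀) := by
      apply Submodule.span_le.mpr
      rintro v ⟨bb, rfl⟩
      simp only [SetLike.mem_coe, LinearMap.mem_ker]
      show (L ↑↑bb) x₀ = 0
      rw [hLapp, ← hy]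
      exact (bb : Z).2
    have h0 := hle hmem
    rw [LinearMap.mem_ker] at h0
    have h0' : (L k) x₀ = 0 := h0
    rw [hLapp, ← hy, hk1] at h0'
    norm_num at h0'
  have hOpt : LinearIndependent ℝ
      (fun o => Option.casesOn' o (L k) (fun b : B => L ↑↑b) : Option ↥B → _) :=
    LinearIndependent.option hBind hnotmem
  -- the corresponding rows of A are linearly independent
  set f : Option ↥B → Fin m := fun o => Option.casesOn' o k (fun b => ↑↑b) with hf
  have hfinj : Function.Injective f := by
    intro o1 o2 h12
    cases o1 with
    | none => cases o2 with
      | none => rfl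
      | some b =>
        exfalso
        apply hkZ
        have he : k = ((b : Z) : Fin m) := h12
        rw [he]
        exact (b : Z).2
    | some b1 => cases o2 with
      | none =>
        exfalso
        apply hkZ
        have he : k = ((b1 : Z) : Fin m) := h12.symm
        rw [he]
        exact (b1 : Z).2
      | some b2 =>
        congr 1
        exact Subtype.coe_injective (Subtype.coe_injective h12)
  have hrows : LinearIndependent ℝ (fun o : Option ↥B => (A.submatrix f id) o) := by
    apply LinearIndependent.of_comp (rowFun n)
    have : ((rowFun n) ∘ fun o : Option ↥B => (A.submatrix f id) o)
        = (fun o => Option.casesOn' o (L k) (fun b : B => L ↑↑b)) := by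
      funext o
      cases o <;> rfl
    rw [this]
    exact hOpt
  obtain ⟨g, hginj, hgunit⟩ := exists_good_cols (A.submatrix f id) hrows
  set M : Matrix (Option ↥B) (Option ↥B) ℝ := A.submatrix f g with hM
  have hMunit : IsUnit M := hgunit
  have hMdet : M.det ≠ 0 := by
    have := (Matrix.isUnit_iff_isUnit_det M).1 hMunit
    exact this.ne_zero
  -- the vecMul equation
  set c' : Option ↥B → ℝ := fun o => Option.casesOn' o (y j) c with hc'
  have hsum : ∀ x : Fin n → ℝ,
      (∑ b : B, c b * A.mulVec x ↑↑b) = A.mulVec x j - y j * A.mulVec x k := by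
    intro x
    have h1 := LinearMap.congr_fun hc x
    simpa only [LinearMap.coe_sum, Finset.sum_apply, LinearMap.smul_apply, smul_eq_mul,
      LinearMap.sub_apply, hLapp] using h1
  have hvm : c' ᵥ* M = fun t => A j (g t) := by
    funext t
    have hx := hsum (Pi.single (g t) 1)
    have hmv : ∀ i : Fin m, A.mulVec (Pi.single (g t) 1) i = A i (g t) := by
      intro i
      show A i ⬝ᵥ Pi.single (g t) 1 = A i (g t)
      rw [dotProduct_single, mul_one]
    simp only [hmv] at hx
    show (∑ o : Option ↥B, c' o * M o t) = A j (g t)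
    rw [Fintype.sum_option]
    simp only [hc', hM, Option.casesOn'_none, Option.casesOn'_some, Matrix.submatrix_apply, hf]
    rw [hx]
    ring
  -- Cramer's rule
  have hcramer : M.det • c' = Matrix.cramer Mᵀ (fun t => A j (g t)) := by
    rw [← hvm, ← Matrix.mulVec_transpose, Matrix.cramer_eq_adjugate_mulVec,
      Matrix.mulVec_mulVec, Matrix.adjugate_mul, Matrix.det_transpose,
      Matrix.smul_mulVec, Matrix.one_mulVec]
  have hentry : M.det * y j = (A.submatrix (Function.update f none j) g).det := by
    have h1 := congrFun hcramer none
    simp only [Pi.smul_apply, smul_eq_mul, hc', Option.casesOn'_none] at h1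
    rw [h1, Matrix.cramer_apply, Matrix.updateCol_transpose, Matrix.det_transpose]
    congr 1
    ext o t
    by_cases ho : o = none
    · subst ho
      simp [Matrix.updateRow_self, Function.update_self]
    · simp [Matrix.updateRow_ne ho, Function.update_of_ne ho, hM]
  have hupdinj : Function.Injective (Function.update f none j) := by
    intro o1 o2 h12
    cases o1 with
    | none => cases o2 with
      | none => rfl
      | some b =>
        rw [Function.update_self, Function.update_of_ne (by simp)] at h12
        exact absurd (h12 ▸ (b : Z).2) hjZ
    | some b1 => cases o2 with
      | none =>
        rw [Function.update_self, Function.update_of_ne (by simp)] at h12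
        exact absurd (h12.symm ▸ (b1 : Z).2) hjZ
      | some b2 =>
        rw [Function.update_of_ne (by simp), Function.update_of_ne (by simp)] at h12
        congr 1
        exact Subtype.coe_injective (Subtype.coe_injective h12)
  have hTU1 : M.det ∈ Set.range SignType.cast :=
    (A.isTotallyUnimodular_iff_fintype).1 hA (Option ↥B) f g
  have hTU2 : (A.submatrix (Function.update f none j) g).det ∈ Set.range SignType.cast :=
    (A.isTotallyUnimodular_iff_fintype).1 hA (Option ↥B) (Function.update f none j) g
  have hdet1 : M.det = 1 ∨ M.det = -1 := by
    obtain ⟨s, hs⟩ := hTU1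
    cases s with
    | zero => exfalso; apply hMdet; rw [← hs]; simp
    | pos => left; rw [← hs]; simp
    | neg => right; rw [← hs]; simp
  have hd2 : (A.submatrix (Function.update f none j) g).det = -1 ∨
      (A.submatrix (Function.update f none j) g).det = 0 ∨
      (A.submatrix (Function.update f none j) g).det = 1 := by
    obtain ⟨s, hs⟩ := hTU2
    cases s with
    | zero => right; left; rw [← hs]; simp
    | pos => right; right; rw [← hs]; simp
    | neg => left; rw [← hs]; simp
  rcases hdet1 with h1 | h1 <;> rcases hd2 with h2 | h2 | h2 <;>
    rw [h1, h2] at hentry <;> norm_num at hentry <;>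
    first | tauto | (left; linarith) | (right; left; linarith) | (right; right; linarith)

/-- If `A` is totally unimodular and the feasible set is nonempty, then some `x* ∈ F`
simultaneously minimizes the l0 objective and the l1 objective over `F`, has all entries of
`A x*` in `{−1,0,1}`, and the l1 minimum equals the l0 minimum. -/
theorem stmt3 {m n : ℕ} (A : Matrix (Fin m) (Fin n) ℝ) (hA : A.IsTotallyUnimodular)
    (k : Fin m) (I : Finset (Fin m)) (hk : k ∉ I)
    (hne : (feasSet A k I).Nonempty) :
    ∃ x ∈ feasSet A k I,
      (∀ x' ∈ feasSet A k I, l0Obj A I x ≤ l0Obj A I x') ∧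
      (∀ x' ∈ feasSet A k I, l1Obj A I x ≤ l1Obj A I x') ∧
      (∀ i : Fin m, A.mulVec x i ∈ ({-1, 0, 1} : Set ℝ)) ∧
      l1Obj A I x = (l0Obj A I x : ℝ) := by
  classical
  obtain ⟨x₀, hx₀⟩ := hne
  -- basic facts
  have hfeas_k : ∀ x ∈ feasSet A k I, A.mulVec x k = 1 := fun x hx => hx.1
  have hfeas_I : ∀ x ∈ feasSet A k I, ∀ i ∈ I, A.mulVec x i = 0 := fun x hx => hx.2
  -- y-space objects
  set h : (Fin m → ℝ) → ℝ := fun y => ∑ i ∈ Iᶜ, |y i| with hh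
  have hl1 : ∀ x, l1Obj A I x = h (A.mulVec x) := fun _ => rfl
  set cnt : (Fin m → ℝ) → ℕ := fun y => (Iᶜ.filter (fun i => y i ≠ 0)).card with hcnt
  have hl0 : ∀ x, l0Obj A I x = cnt (A.mulVec x) := by
    intro x
    unfold l0Obj
    rw [hcnt]
    congr 1
  ------------------------------------------------------------------
  -- PART 1 : an ℓ0-minimizer with {-1,0,1} values
  ------------------------------------------------------------------
  set l0set : Set ℕ := (fun x => l0Obj A I x) '' feasSet A k I with hl0set
  have hl0ne : l0set.Nonempty := ⟨_, ⟨x₀, hx₀, rfl⟩⟩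
  obtain ⟨xz, hxzF, hxzval⟩ := Nat.sInf_mem hl0ne
  have hs₀min : ∀ x' ∈ feasSet A k I, sInf l0set ≤ l0Obj A I x' :=
    fun x' hx' => Nat.sInf_le ⟨x', hx', rfl⟩
  have hyzk : A.mulVec xz k = 1 := hxzF.1
  have Hz : ∀ x', (∀ i, A.mulVec xz i = 0 → A.mulVec x' i = 0) →
      ∃ c : ℝ, A.mulVec x' = c • A.mulVec xz := by
    intro x' hx'
    set y := A.mulVec xz with hydef
    by_cases hw : A.mulVec x' = (A.mulVec x' k) • y
    · exact ⟨_, hw⟩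
    exfalso
    set w := A.mulVec x' with hwdef
    set u : Fin n → ℝ := x' - (w k) • xz with hu
    have hwu : A.mulVec u = w - (w k) • y := by
      rw [hu, Matrix.mulVec_sub, Matrix.mulVec_smul]
    have hwu0 : A.mulVec u ≠ 0 := by
      rw [hwu]
      intro h0
      exact hw (by rwa [sub_eq_zero] at h0)
    obtain ⟨jj, hjj⟩ := Function.ne_iff.1 hwu0
    simp only [Pi.zero_apply] at hjj
    have hzero : ∀ i, y i = 0 → A.mulVec u i = 0 := by
      intro i h0
      rw [hwu]
      simp [hx' i h0, h0]
    have hyjj : y jj ≠ 0 := fun h0 => hjj (hzero jj h0)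
    set t : ℝ := y jj / (A.mulVec u jj) with ht
    set v : Fin n → ℝ := xz - t • u with hv
    have hAv : A.mulVec v = y - t • A.mulVec u := by
      rw [hv, Matrix.mulVec_sub, Matrix.mulVec_smul]
    have hAuk : A.mulVec u k = 0 := by
      rw [hwu]
      simp [hyzk]
    have hvF : v ∈ feasSet A k I := by
      constructor
      · show A.mulVec v k = 1
        rw [hAv]
        simp [hAuk, hyzk]
      · intro i hi
        show A.mulVec v i = 0
        have hyi : y i = 0 := hfeas_I xz hxzF i hi
        rw [hAv]
        simp [hzero i hyi, hyi]
    have hlt : l0Obj A I v < l0Obj A I xz := by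
      apply Finset.card_lt_card
      rw [Finset.ssubset_iff_of_subset]
      · refine ⟨jj, ?_, ?_⟩
        · rw [Finset.mem_filter, Finset.mem_compl]
          constructor
          · intro hjI
            exact hyjj (hfeas_I xz hxzF jj hjI)
          · exact hyjj
        · rw [Finset.mem_filter]
          intro ⟨_, hne0⟩
          apply hne0
          show A.mulVec v jj = 0
          rw [hAv]
          simp only [Pi.sub_apply, Pi.smul_apply, smul_eq_mul, ht]
          rw [div_mul_cancel₀ _ hjj]
          ring
      · intro i hi
        rw [Finset.mem_filter] at hi ⊢
        refine ⟨hi.1, ?_⟩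
        intro h0
        apply hi.2
        show A.mulVec v i = 0
        by_cases hyi : y i = 0
        · rw [hAv]; simp [hzero i hyi, hyi]
        · exact absurd h0 hyi
    have h5 := hs₀min v hvF
    have hxzval' : l0Obj A I xz = sInf l0set := hxzval
    omega
  have hyz_mem : ∀ i, A.mulVec xz i ∈ ({-1, 0, 1} : Set ℝ) := key_tu hA hyzk Hz
  have hl1z : l1Obj A I xz = (l0Obj A I xz : ℝ) := by
    unfold l1Obj l0Obj
    rw [← Finset.sum_boole]
    apply Finset.sum_congr rfl
    intro i _
    rcases hyz_mem i with hv | hv | hv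
    · rw [show A i ⬝ᵥ xz = A.mulVec xz i from rfl, hv]
      norm_num
    · rw [show A i ⬝ᵥ xz = A.mulVec xz i from rfl, hv]
      norm_num
    · rw [show A i ⬝ᵥ xz = A.mulVec xz i from rfl, hv]
      norm_num
  ------------------------------------------------------------------
  -- PART 2 : an ℓ1-minimizer exists
  ------------------------------------------------------------------
  set S : Set (Fin m → ℝ) :=
    {y | y ∈ LinearMap.range A.mulVecLin ∧ y k = 1 ∧ ∀ i ∈ I, y i = 0} with hSdef
  have hmem_S : ∀ x ∈ feasSet A k I, A.mulVec x ∈ S := by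
    intro x hx
    exact ⟨⟨x, Matrix.mulVecLin_apply A x⟩, hx.1, hx.2⟩
  have hS_feas : ∀ y ∈ S, ∃ x ∈ feasSet A k I, A.mulVec x = y := by
    rintro y ⟨⟨x, hx⟩, h1, h2⟩
    rw [Matrix.mulVecLin_apply] at hx
    subst hx
    exact ⟨x, ⟨h1, h2⟩, rfl⟩
  have hScl : IsClosed S := by
    have h1 : IsClosed ((LinearMap.range A.mulVecLin : Submodule ℝ (Fin m → ℝ)) : Set (Fin m → ℝ)) :=
      Submodule.closed_of_finiteDimensional _
    have h2 : IsClosed {y : Fin m → ℝ | y k = 1} :=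
      isClosed_eq (continuous_apply k) continuous_const
    have h3 : IsClosed {y : Fin m → ℝ | ∀ i ∈ I, y i = 0} := by
      have : {y : Fin m → ℝ | ∀ i ∈ I, y i = 0} = ⋂ i ∈ I, {y : Fin m → ℝ | y i = 0} := by
        ext y; simp
      rw [this]
      exact isClosed_biInter fun i _ => isClosed_eq (continuous_apply i) continuous_const
    have hSeq : S = ((LinearMap.range A.mulVecLin : Submodule ℝ (Fin m → ℝ)) : Set (Fin m → ℝ)) ∩
        ({y : Fin m → ℝ | y k = 1} ∩ {y : Fin m → ℝ | ∀ i ∈ I, y i = 0}) := by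
      ext y
      constructor <;> intro hy <;> exact ⟨hy.1, hy.2.1, hy.2.2⟩
    rw [hSeq]
    exact h1.inter (h2.inter h3)
  have hhcont : Continuous h := by
    apply continuous_finset_sum
    intro i _
    exact (continuous_apply i).abs
  set y₀ := A.mulVec x₀ with hy₀
  have hy₀S : y₀ ∈ S := hmem_S x₀ hx₀
  have h0le : ∀ y, (0:ℝ) ≤ h y := fun y => Finset.sum_nonneg fun i _ => abs_nonneg _
  set C : Set (Fin m → ℝ) := S ∩ {y | h y ≤ h y₀} with hC
  have hCcl : IsClosed C := hScl.inter (isClosed_le hhcont continuous_const)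
  have hCsub : C ⊆ Set.pi Set.univ (fun _ : Fin m => Set.Icc (-(h y₀)) (h y₀)) := by
    rintro y ⟨hyS, hyle⟩ i _
    have habs : |y i| ≤ h y₀ := by
      by_cases hiI : i ∈ I
      · rw [hyS.2.2 i hiI]
        simpa using h0le y₀
      · have h1 : |y i| ≤ h y :=
          Finset.single_le_sum (f := fun j => |y j|)
            (fun _ _ => abs_nonneg _) (Finset.mem_compl.2 hiI)
        have h2 : h y ≤ h y₀ := hyle
        linarith
    show y i ∈ Set.Icc (-(h y₀)) (h y₀)
    rw [Set.mem_Icc]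
    exact abs_le.1 habs
  have hCcp : IsCompact C :=
    IsCompact.of_isClosed_subset (isCompact_univ_pi fun _ => isCompact_Icc) hCcl hCsub
  obtain ⟨ym, hymC, hymmin⟩ := hCcp.exists_isMinOn ⟨y₀, hy₀S, show h y₀ ≤ h y₀ from le_refl _⟩ hhcont.continuousOn
  have hymS : ym ∈ S := hymC.1
  have hymglob : ∀ z ∈ S, h ym ≤ h z := by
    intro z hz
    by_cases hzle : h z ≤ h y₀
    · exact isMinOn_iff.mp hymmin z ⟨hz, show h z ≤ h y₀ from hzle⟩
    · have h1 : h ym ≤ h y₀ := isMinOn_iff.mp hymmin y₀ ⟨hy₀S, show h y₀ ≤ h y₀ from le_refl _⟩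
      linarith
  ------------------------------------------------------------------
  -- PART 3 : among the ℓ1-minimizers, minimize the support size
  ------------------------------------------------------------------
  set M1 : Set (Fin m → ℝ) := {y | y ∈ S ∧ ∀ z ∈ S, h y ≤ h z} with hM1
  have hymM1 : ym ∈ M1 := ⟨hymS, hymglob⟩
  set T : Set ℕ := cnt '' M1 with hT
  have hTne : T.Nonempty := ⟨_, ym, hymM1, rfl⟩
  obtain ⟨y₁, hy₁M1, hy₁val⟩ := Nat.sInf_mem hTne
  have hTmin : ∀ z ∈ M1, sInf T ≤ cnt z := fun z hz => Nat.sInf_le ⟨z, hz, rfl⟩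
  obtain ⟨x₁, hx₁F, hx₁y⟩ := hS_feas y₁ hy₁M1.1
  have hy₁k : y₁ k = 1 := hy₁M1.1.2.1
  have hy₁I : ∀ i ∈ I, y₁ i = 0 := hy₁M1.1.2.2
  -- the exchange argument
  have H1 : ∀ x', (∀ i, A.mulVec x₁ i = 0 → A.mulVec x' i = 0) →
      ∃ c : ℝ, A.mulVec x' = c • A.mulVec x₁ := by
    intro x' hx'
    rw [hx₁y] at hx' ⊢
    by_cases hw : A.mulVec x' = (A.mulVec x' k) • y₁
    · exact ⟨_, hw⟩
    exfalso
    set w := A.mulVec x' with hwdef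
    set u : Fin n → ℝ := x' - (w k) • x₁ with hu
    set w' := A.mulVec u with hw'def
    have hw'eq : w' = w - (w k) • y₁ := by
      rw [hw'def, hu, Matrix.mulVec_sub, Matrix.mulVec_smul, hx₁y]
    have hw'0 : w' ≠ 0 := by
      rw [hw'eq]
      intro h0
      exact hw (by rwa [sub_eq_zero] at h0)
    have hzero : ∀ i, y₁ i = 0 → w' i = 0 := by
      intro i h0
      rw [hw'eq]
      simp [hx' i h0, h0]
    have hw'k : w' k = 0 := by
      rw [hw'eq]
      simp [hy₁k]
    -- pick the coordinate with minimal ratio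
    set D := Finset.univ.filter (fun i => w' i ≠ 0) with hD
    have hDne : D.Nonempty := by
      obtain ⟨i, hi⟩ := Function.ne_iff.1 hw'0
      simp only [Pi.zero_apply] at hi
      exact ⟨i, by simp [hD, hi]⟩
    obtain ⟨jj, hjjD, hjjmin⟩ := Finset.exists_min_image D (fun i => |y₁ i| / |w' i|) hDne
    have hw'jj : w' jj ≠ 0 := by
      have := hjjD
      rw [hD, Finset.mem_filter] at this
      exact this.2
    have hy₁jj : y₁ jj ≠ 0 := fun h0 => hw'jj (hzero jj h0)
    set t : ℝ := -(y₁ jj) / (w' jj) with htdef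
    have htb : ∀ i, |t * w' i| ≤ |y₁ i| := by
      intro i
      by_cases hwi : w' i = 0
      · simp [hwi]
      · have h1 : |t| ≤ |y₁ i| / |w' i| := by
          have h2 := hjjmin i (by simp [hD, hwi])
          have h3 : |t| = |y₁ jj| / |w' jj| := by
            rw [htdef, abs_div, abs_neg]
          rw [h3]
          exact h2
        rw [abs_mul]
        calc |t| * |w' i| ≤ (|y₁ i| / |w' i|) * |w' i| :=
              mul_le_mul_of_nonneg_right h1 (abs_nonneg _)
          _ = |y₁ i| := div_mul_cancel₀ _ (abs_ne_zero.2 hwi)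
    -- the two perturbations
    set σ : ℝ := ∑ i ∈ Iᶜ, Real.sign (y₁ i) * (t * w' i) with hσ
    have hplus : h (y₁ + t • w') = h y₁ + σ := by
      rw [hh, hσ]
      rw [← Finset.sum_add_distrib]
      apply Finset.sum_congr rfl
      intro i _
      show |y₁ i + t * w' i| = |y₁ i| + Real.sign (y₁ i) * (t * w' i)
      exact abs_add_sign (htb i)
    have hminus : h (y₁ - t • w') = h y₁ - σ := by
      rw [hh, hσ]
      rw [← Finset.sum_sub_distrib]
      apply Finset.sum_congr rfl
      intro i _
      show |y₁ i - t * w' i| = |y₁ i| - Real.sign (y₁ i) * (t * w' i)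
      have := abs_add_sign (a := y₁ i) (b := -(t * w' i)) (by rw [abs_neg]; exact htb i)
      rw [← sub_eq_add_neg] at this
      rw [this]
      ring
    have hplusS : y₁ + t • w' ∈ S := by
      refine ⟨?_, ?_, ?_⟩
      · obtain ⟨xx, hxx⟩ : y₁ + t • w' ∈ LinearMap.range A.mulVecLin := by
          refine ⟨x₁ + t • u, ?_⟩
          rw [Matrix.mulVecLin_apply, Matrix.mulVec_add, Matrix.mulVec_smul, hx₁y, hw'def]
        exact ⟨xx, hxx⟩
      · simp [hy₁k, hw'k]
      · intro i hi
        simp [hy₁I i hi, hzero i (hy₁I i hi)]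
    have hminusS : y₁ - t • w' ∈ S := by
      refine ⟨?_, ?_, ?_⟩
      · refine ⟨x₁ - t • u, ?_⟩
        rw [Matrix.mulVecLin_apply, Matrix.mulVec_sub, Matrix.mulVec_smul, hx₁y, hw'def]
      · simp [hy₁k, hw'k]
      · intro i hi
        simp [hy₁I i hi, hzero i (hy₁I i hi)]
    have hσ0 : σ = 0 := by
      have h1 := hy₁M1.2 _ hplusS
      have h2 := hy₁M1.2 _ hminusS
      rw [hplus] at h1
      rw [hminus] at h2
      linarith
    have hvM1 : (y₁ + t • w') ∈ M1 := by
      refine ⟨hplusS, ?_⟩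
      intro z hz
      rw [hplus, hσ0, add_zero]
      exact hy₁M1.2 z hz
    have hcntlt : cnt (y₁ + t • w') < cnt y₁ := by
      apply Finset.card_lt_card
      rw [Finset.ssubset_iff_of_subset]
      · refine ⟨jj, ?_, ?_⟩
        · rw [Finset.mem_filter, Finset.mem_compl]
          exact ⟨fun hjI => hy₁jj (hy₁I jj hjI), hy₁jj⟩
        · rw [Finset.mem_filter]
          intro ⟨_, hne0⟩
          apply hne0
          show y₁ jj + t * w' jj = 0
          rw [htdef, div_mul_cancel₀ _ hw'jj]
          ring
      · intro i hi
        rw [Finset.mem_filter] at hi ⊢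
        refine ⟨hi.1, ?_⟩
        intro h0
        apply hi.2
        show y₁ i + t * w' i = 0
        by_cases hyi : y₁ i = 0
        · simp [hyi, hzero i hyi]
        · exact absurd h0 hyi
    have := hTmin _ hvM1
    omega
  have hky₁ : ∀ i, A.mulVec x₁ i ∈ ({-1, 0, 1} : Set ℝ) :=
    key_tu hA (by rw [hx₁y]; exact hy₁k) H1
  ------------------------------------------------------------------
  -- Final assembly
  ------------------------------------------------------------------
  have hl1x₁ : l1Obj A I x₁ = (l0Obj A I x₁ : ℝ) := by
    unfold l1Obj l0Obj
    rw [← Finset.sum_boole]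
    apply Finset.sum_congr rfl
    intro i _
    rcases hky₁ i with hv | hv | hv <;>
      rw [show A i ⬝ᵥ x₁ = A.mulVec x₁ i from rfl, hv] <;> norm_num
  have hl1min : ∀ x' ∈ feasSet A k I, l1Obj A I x₁ ≤ l1Obj A I x' := by
    intro x' hx'
    rw [hl1, hl1, hx₁y]
    exact hy₁M1.2 _ (hmem_S x' hx')
  have hl0x₁min : ∀ x' ∈ feasSet A k I, l0Obj A I x₁ ≤ l0Obj A I x' := by
    intro x' hx'
    have h1 : l1Obj A I x₁ ≤ l1Obj A I xz := hl1min xz hxzF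
    rw [hl1x₁, hl1z] at h1
    have h2 : l0Obj A I x₁ ≤ l0Obj A I xz := by exact_mod_cast h1
    calc l0Obj A I x₁ ≤ l0Obj A I xz := h2
      _ = sInf l0set := hxzval
      _ ≤ l0Obj A I x' := hs₀min x' hx'
  exact ⟨x₁, hx₁F, hl0x₁min, hl1min, hky₁, hl1x₁⟩
end

section
/- Let A be a totally unimodular real m×n matrix, k ∈ {1,…,m}, and I ⊆ {1,…,m} with k ∉ I, and suppose the feasible set F is nonempty. Then there exists x* ∈ F with ‖A x*‖_∞ ≤ 1 that minimizes the l0 objective ‖A(Ī,:)x‖₀ over all of F; consequently the minimum of ‖A(Ī,:)x‖₀ over F equals the minimum of ‖A(Ī,:)x‖₀ over {x ∈ F : ‖A x‖_∞ ≤ 1}. -/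
open Matrix

open Classical in
lemma tu_key {m n : ℕ} (A : Matrix (Fin m) (Fin n) ℝ) (hA : A.IsTotallyUnimodular)
    (k : Fin m) (S : Finset (Fin m)) (x0 : Fin n → ℝ)
    (hx0 : ∀ i ∈ S, A i ⬝ᵥ x0 = if i = k then (1:ℝ) else 0) :
    ∃ x : Fin n → ℝ, (∀ i ∈ S, A i ⬝ᵥ x = if i = k then (1:ℝ) else 0) ∧
      ∀ i : Fin m, |A i ⬝ᵥ x| ≤ 1 := by
  classical
  obtain ⟨b, hbsub, hbspan, hbind⟩ := exists_linearIndependent ℝ (A '' ↑S)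
  have hbfin : b.Finite := (S.finite_toSet.image A).subset hbsub
  haveI : Fintype b := hbfin.fintype
  have hex : ∀ w : b, ∃ i : Fin m, i ∈ S ∧ A i = (w : Fin n → ℝ) := by
    intro w
    obtain ⟨i, hiS, hAi⟩ := hbsub w.2
    exact ⟨i, hiS, hAi⟩
  choose e heS heA using hex
  have he_inj : Function.Injective e := by
    intro a a' h
    have : (a : Fin n → ℝ) = (a' : Fin n → ℝ) := by rw [← heA a, ← heA a', h]
    exact Subtype.ext this
  set M : Matrix b (Fin n) ℝ := A.submatrix e id with hM
  have hMrows : (fun q : b => M q) = ((↑) : b → (Fin n → ℝ)) := funext fun q => heA q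
  have hMind : LinearIndependent ℝ M := by
    show LinearIndependent ℝ (fun q : b => M q)
    rw [hMrows]; exact hbind
  have hrank : M.rank = Fintype.card b := hMind.rank_matrix
  have hspan_cols : Submodule.span ℝ (Set.range Mᵀ) = ⊤ := by
    apply Submodule.eq_top_of_finrank_eq
    rw [show Set.range Mᵀ = Set.range M.col from rfl, ← Matrix.rank_eq_finrank_span_cols, hrank, Module.finrank_pi]
  obtain ⟨b2, hb2sub, hb2span, hb2ind⟩ := exists_linearIndependent ℝ (Set.range Mᵀ)
  haveI : Fintype b2 := ((Set.finite_range Mᵀ).subset hb2sub).fintype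
  have hb2top : Submodule.span ℝ b2 = ⊤ := by rw [hb2span, hspan_cols]
  let bas2 : Module.Basis b2 ℝ (b → ℝ) := Module.Basis.mk hb2ind (by rw [Subtype.range_coe, hb2top])
  have hcard : Fintype.card b = Fintype.card b2 := by
    have h1 := Module.finrank_eq_card_basis bas2
    rw [Module.finrank_pi] at h1
    exact h1
  let equiv : b ≃ b2 := Fintype.equivOfCardEq hcard
  have hex2 : ∀ v : b2, ∃ j : Fin n, Mᵀ j = (v : b → ℝ) := fun v => hb2sub v.2
  choose g0 hg0 using hex2
  set g : b → Fin n := fun p => g0 (equiv p) with hg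
  set B : Matrix b b ℝ := A.submatrix e g with hB
  have hBeq : B = (Pi.basisFun ℝ b).toMatrix ⇑(bas2.reindex equiv.symm) := by
    ext q p
    rw [Module.Basis.toMatrix_apply, Pi.basisFun_repr, Module.Basis.reindex_apply, Equiv.symm_symm]
    have : bas2 (equiv p) = ((equiv p : b2) : b → ℝ) := by
      simp [bas2, Module.Basis.mk_apply]
    rw [this, ← hg0 (equiv p)]
    rfl
  have hdet : IsUnit B.det := by
    rw [hBeq]
    haveI := Module.Basis.invertibleToMatrix (Pi.basisFun ℝ b) (bas2.reindex equiv.symm)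
    exact isUnit_det_of_invertible _
  have hdetB1 : |B.det| = 1 := by
    obtain ⟨s, hs⟩ := (isTotallyUnimodular_iff_fintype A).mp hA b e g
    have hs' : (s : ℝ) = B.det := hs
    cases s with
    | zero => exfalso; rw [← hs'] at hdet; simp at hdet
    | pos => rw [← hs']; simp
    | neg => rw [← hs']; simp
  set c' : b → ℝ := fun p => if e p = k then (1:ℝ) else 0 with hc'
  set y : b → ℝ := B⁻¹ *ᵥ c' with hy
  have hBy : B *ᵥ y = c' := by
    rw [hy, mulVec_mulVec, Matrix.mul_nonsing_inv _ hdet, one_mulVec]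
  set xs : Fin n → ℝ := fun j => ∑ p : b, if j = g p then y p else 0 with hxs
  have hdot : ∀ i : Fin m, A i ⬝ᵥ xs = (fun p : b => A i (g p)) ⬝ᵥ y := by
    intro i
    simp only [dotProduct, hxs, Finset.mul_sum]
    rw [Finset.sum_comm]
    refine Finset.sum_congr rfl fun p _ => ?_
    rw [Finset.sum_eq_single (g p)]
    · simp
    · intro j _ hj; simp [hj]
    · intro h; exact absurd (Finset.mem_univ _) h
  have hrow : ∀ q : b, A (e q) ⬝ᵥ xs = c' q := by
    intro q
    rw [hdot (e q), ← hBy]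
    rfl
  have hbound : ∀ i : Fin m, |A i ⬝ᵥ xs| ≤ 1 := by
    intro i
    rw [hdot i]
    set w : b → ℝ := fun p => A i (g p) with hw
    rw [hy, dotProduct_mulVec]
    set z : b → ℝ := w ᵥ* B⁻¹ with hz
    have hzp : ∀ p : b, |z p| ≤ 1 := by
      intro p
      have hzval : z p = (B.det)⁻¹ * (B.updateRow p w).det := by
        rw [hz, Matrix.inv_def, Ring.inverse_eq_inv', ← mulVec_transpose, transpose_smul,
          adjugate_transpose, smul_mulVec, ← cramer_eq_adjugate_mulVec]
        simp [cramer_transpose_apply]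
      have hupd : B.updateRow p w = A.submatrix (Function.update e p i) g := by
        ext q c
        rw [Matrix.updateRow_apply]
        by_cases hq : q = p
        · simp [hq, hw]
        · simp [hq, hB, Function.update_of_ne hq]
      have habs : |(B.updateRow p w).det| ≤ 1 := by
        rw [hupd]
        obtain ⟨s, hs⟩ := (isTotallyUnimodular_iff_fintype A).mp hA b (Function.update e p i) g
        rw [← hs]
        cases s <;> simp
      rw [hzval, abs_mul, abs_inv, hdetB1]
      simpa using habs
    by_cases hpk : ∃ p0 : b, e p0 = k
    · obtain ⟨p0, hp0⟩ := hpk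
      have hc'single : c' = Pi.single p0 1 := by
        funext p
        by_cases hpp : p = p0
        · subst hpp; simp [hc', hp0]
        · have : e p ≠ k := fun h => hpp (he_inj (h.trans hp0.symm))
          simp [hc', this, Pi.single_eq_of_ne hpp]
      rw [hc'single, dotProduct_single, mul_one]
      exact hzp p0
    · have hc0 : c' = 0 := by
        funext p
        have : e p ≠ k := fun h => hpk ⟨p, h⟩
        simp [hc', this]
      rw [hc0]
      simp
  refine ⟨xs, ?_, hbound⟩
  intro i hiS
  have hmem : A i ∈ Submodule.span ℝ b := by
    rw [hbspan]; exact Submodule.subset_span ⟨i, hiS, rfl⟩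
  have htransfer : ∀ v ∈ Submodule.span ℝ b, v ⬝ᵥ xs = v ⬝ᵥ x0 := by
    intro v hv
    induction hv using Submodule.span_induction with
    | mem w hw =>
        have h1 : A (e ⟨w, hw⟩) ⬝ᵥ xs = c' ⟨w, hw⟩ := hrow ⟨w, hw⟩
        have h2 : A (e ⟨w, hw⟩) ⬝ᵥ x0 = if e ⟨w, hw⟩ = k then (1:ℝ) else 0 :=
          hx0 _ (heS ⟨w, hw⟩)
        have hAe : A (e ⟨w, hw⟩) = w := heA ⟨w, hw⟩
        rw [← hAe, h1, h2]
    | zero => simp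
    | add u v _ _ hu hv => simp [add_dotProduct, hu, hv]
    | smul a u _ hu => simp [smul_dotProduct, hu]
  rw [htransfer (A i) hmem, hx0 i hiS]
/-- If `A` is totally unimodular and `F` is nonempty, then there exists `x* ∈ F` with
`‖A x*‖_∞ ≤ 1` minimizing the l0 objective over all of `F`; consequently the l0 minimum over `F`
equals the l0 minimum over `{x ∈ F : ‖A x‖_∞ ≤ 1}`. -/
theorem stmt4 {m n : ℕ} (A : Matrix (Fin m) (Fin n) ℝ) (hA : A.IsTotallyUnimodular)
    (k : Fin m) (I : Finset (Fin m)) (hk : k ∉ I)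
    (hne : (feasSet A k I).Nonempty) :
    (∃ x ∈ feasSet A k I,
      (∀ i : Fin m, |A.mulVec x i| ≤ 1) ∧
      ∀ x' ∈ feasSet A k I, l0Obj A I x ≤ l0Obj A I x') ∧
    sInf {v : ℕ | ∃ x ∈ feasSet A k I, l0Obj A I x = v} =
      sInf {v : ℕ | ∃ x ∈ feasSet A k I, (∀ i : Fin m, |A.mulVec x i| ≤ 1) ∧
        l0Obj A I x = v} := by
  classical
  have hVne : {v : ℕ | ∃ x ∈ feasSet A k I, l0Obj A I x = v}.Nonempty := by
    obtain ⟨x, hx⟩ := hne; exact ⟨l0Obj A I x, x, hx, rfl⟩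
  obtain ⟨x1, hx1F, hx1⟩ := Nat.sInf_mem hVne
  have hμle : ∀ x ∈ feasSet A k I,
      sInf {v : ℕ | ∃ x ∈ feasSet A k I, l0Obj A I x = v} ≤ l0Obj A I x :=
    fun x hx => Nat.sInf_le ⟨x, hx, rfl⟩
  set S : Finset (Fin m) := insert k (Finset.univ.filter fun i => A i ⬝ᵥ x1 = 0) with hS
  have hx0 : ∀ i ∈ S, A i ⬝ᵥ x1 = if i = k then (1:ℝ) else 0 := by
    intro i hi
    by_cases hik : i = k
    · subst hik; simp [hx1F.1]
    · rcases Finset.mem_insert.mp hi with h | h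
      · exact absurd h hik
      · simp only [Finset.mem_filter] at h
        simp [hik, h.2]
  obtain ⟨xs, hxsS, hxsB⟩ := tu_key A hA k S x1 hx0
  have hxsF : xs ∈ feasSet A k I := by
    constructor
    · have := hxsS k (Finset.mem_insert_self k _)
      simpa using this
    · intro i hiI
      have hiS : i ∈ S := Finset.mem_insert_of_mem (by simp [hx1F.2 i hiI])
      have hik : i ≠ k := fun h => hk (h ▸ hiI)
      have := hxsS i hiS
      simpa [hik] using this
  have hle1 : l0Obj A I xs ≤ l0Obj A I x1 := by
    apply Finset.card_le_card
    intro i hi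
    simp only [Finset.mem_filter] at hi ⊢
    refine ⟨hi.1, fun h0 => hi.2 ?_⟩
    have hiS : i ∈ S := Finset.mem_insert_of_mem (by simp [h0])
    have hik : i ≠ k := by
      intro h; subst h; rw [hx1F.1] at h0; exact one_ne_zero h0
    have := hxsS i hiS
    simpa [hik] using this
  have hxsMin : ∀ x' ∈ feasSet A k I, l0Obj A I xs ≤ l0Obj A I x' := by
    intro x' hx'
    calc l0Obj A I xs ≤ l0Obj A I x1 := hle1
      _ = _ := hx1
      _ ≤ l0Obj A I x' := hμle x' hx'
  have hxsB' : ∀ i : Fin m, |A.mulVec xs i| ≤ 1 := fun i => hxsB i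
  constructor
  · exact ⟨xs, hxsF, hxsB', hxsMin⟩
  · have h1 : sInf {v : ℕ | ∃ x ∈ feasSet A k I, l0Obj A I x = v} = l0Obj A I xs := by
      refine le_antisymm (Nat.sInf_le ⟨xs, hxsF, rfl⟩) (le_csInf hVne ?_)
      rintro v ⟨x, hxF, rfl⟩
      exact hxsMin x hxF
    have h2 : sInf {v : ℕ | ∃ x ∈ feasSet A k I, (∀ i : Fin m, |A.mulVec x i| ≤ 1) ∧
        l0Obj A I x = v} = l0Obj A I xs := by
      apply le_antisymm
      · exact Nat.sInf_le ⟨xs, hxsF, hxsB', rfl⟩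
      · refine le_csInf ⟨l0Obj A I xs, xs, hxsF, hxsB', rfl⟩ ?_
        rintro v ⟨x, hxF, -, rfl⟩
        exact hxsMin x hxF
    rw [h1, h2]
end

section
/- Let H be a real m×n matrix and k ∈ {1,…,m}, and assume H(k,:) ≠ 0 and rank(H) = n. Then the minimum of ‖Hθ‖₀ over all θ ∈ ℝⁿ with H(k,:)θ = 1 is attained, the minimum of |J| over all sets J ⊆ {1,…,m} with k ∈ J, rank(H(J̄,:)) < n and rank(H(J̄ ∪ {k},:)) = n is attained, and these two minimum values are equal. -/
open Matrix

/-- The submatrix of `H` consisting of the rows indexed by the finite set `S`. -/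
def rowSub {m n : ℕ} (H : Matrix (Fin m) (Fin n) ℝ) (S : Finset (Fin m)) :
    Matrix {i : Fin m // i ∈ S} (Fin n) ℝ :=
  Matrix.of fun i j => H i.1 j

open Classical in
/-- `‖Hθ‖₀`: the number of nonzero entries of `Hθ`. -/
noncomputable def l0Full {m n : ℕ} (H : Matrix (Fin m) (Fin n) ℝ) (θ : Fin n → ℝ) : ℕ :=
  (Finset.univ.filter fun i => H.mulVec θ i ≠ 0).card

/-- Feasibility for the observability problem: `k ∈ J`, `rank(H(J̄,:)) < n`, and
`rank(H(J̄ ∪ {k},:)) = n`. -/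
def obsFeas {m n : ℕ} (H : Matrix (Fin m) (Fin n) ℝ) (k : Fin m) (J : Finset (Fin m)) : Prop :=
  k ∈ J ∧ (rowSub H Jᶜ).rank < n ∧ (rowSub H (insert k Jᶜ)).rank = n

namespace Stmt7Aux

lemma mulVec_apply {m n : ℕ} (H : Matrix (Fin m) (Fin n) ℝ) (θ : Fin n → ℝ) (i : Fin m) :
    H.mulVec θ i = H i ⬝ᵥ θ := rfl

lemma l0Full_le_card {m n : ℕ} (H : Matrix (Fin m) (Fin n) ℝ) (θ : Fin n → ℝ)
    (S : Finset (Fin m)) (h : ∀ i, H.mulVec θ i ≠ 0 → i ∈ S) : l0Full H θ ≤ S.card := by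
  classical
  unfold l0Full
  exact Finset.card_le_card fun i hi => h i (Finset.mem_filter.mp hi).2

lemma rowSub_mulVec_eq_zero_iff {m n : ℕ} (H : Matrix (Fin m) (Fin n) ℝ) (S : Finset (Fin m))
    (v : Fin n → ℝ) : (rowSub H S).mulVec v = 0 ↔ ∀ i ∈ S, H i ⬝ᵥ v = 0 := by
  constructor
  · intro h i hi
    have := congrFun h ⟨i, hi⟩
    simpa [rowSub, Matrix.mulVec, dotProduct] using this
  · intro h
    funext i
    simpa [rowSub, Matrix.mulVec, dotProduct] using h i.1 i.2

lemma rank_lt_iff {m n : ℕ} (H : Matrix (Fin m) (Fin n) ℝ) (S : Finset (Fin m)) :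
    (rowSub H S).rank < n ↔ ∃ v : Fin n → ℝ, v ≠ 0 ∧ ∀ i ∈ S, H i ⬝ᵥ v = 0 := by
  have hrn := LinearMap.finrank_range_add_finrank_ker (rowSub H S).mulVecLin
  rw [Module.finrank_fin_fun] at hrn
  have hrk : (rowSub H S).rank = Module.finrank ℝ (LinearMap.range (rowSub H S).mulVecLin) := rfl
  constructor
  · intro h
    have hker : LinearMap.ker (rowSub H S).mulVecLin ≠ ⊥ := by
      intro hbot
      rw [hbot, finrank_bot, add_zero] at hrn
      omega
    obtain ⟨v, hv, hv0⟩ := (Submodule.ne_bot_iff _).mp hker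
    exact ⟨v, hv0, (rowSub_mulVec_eq_zero_iff H S v).mp (by simpa using hv)⟩
  · rintro ⟨v, hv0, hv⟩
    have hvker : v ∈ LinearMap.ker (rowSub H S).mulVecLin := by
      simpa using (rowSub_mulVec_eq_zero_iff H S v).mpr hv
    have hne : LinearMap.ker (rowSub H S).mulVecLin ≠ ⊥ :=
      (Submodule.ne_bot_iff _).mpr ⟨v, hvker, hv0⟩
    have hpos : 0 < Module.finrank ℝ (LinearMap.ker (rowSub H S).mulVecLin) := by
      rcases Nat.eq_zero_or_pos (Module.finrank ℝ (LinearMap.ker (rowSub H S).mulVecLin)) with h | h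
      · exact absurd (Submodule.finrank_eq_zero.mp h) hne
      · exact h
    omega

lemma mulVec_eq_zero {m n : ℕ} {H : Matrix (Fin m) (Fin n) ℝ} (hrank : H.rank = n)
    {v : Fin n → ℝ} (hv : H.mulVec v = 0) : v = 0 := by
  have hrn := LinearMap.finrank_range_add_finrank_ker H.mulVecLin
  rw [Module.finrank_fin_fun] at hrn
  have hrk : H.rank = Module.finrank ℝ (LinearMap.range H.mulVecLin) := rfl
  have h0 : Module.finrank ℝ (LinearMap.ker H.mulVecLin) = 0 := by omega
  have hbot := Submodule.finrank_eq_zero.mp h0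
  have : v ∈ LinearMap.ker H.mulVecLin := by simpa using hv
  simpa [hbot] using this

end Stmt7Aux

open Stmt7Aux in
/-- If `H(k,:) ≠ 0` and `rank H = n`, the minimum of `‖Hθ‖₀` subject to `H(k,:)θ = 1` is
attained, the minimum of `|J|` over feasible `J` for the observability problem is attained,
and the two minimum values coincide. -/
theorem stmt7 {m n : ℕ} (H : Matrix (Fin m) (Fin n) ℝ) (k : Fin m)
    (hrow : H k ≠ 0) (hrank : H.rank = n) :
    ∃ θ : Fin n → ℝ, H k ⬝ᵥ θ = 1 ∧
      (∀ θ' : Fin n → ℝ, H k ⬝ᵥ θ' = 1 → l0Full H θ ≤ l0Full H θ') ∧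
      ∃ J : Finset (Fin m), obsFeas H k J ∧
        (∀ J' : Finset (Fin m), obsFeas H k J' → J.card ≤ J'.card) ∧
        J.card = l0Full H θ := by
  classical
  -- a feasible θ exists
  obtain ⟨j, hj⟩ : ∃ j, H k j ≠ 0 := by
    by_contra h
    push_neg at h
    exact hrow (funext h)
  have hfeas : ∃ θ0 : Fin n → ℝ, H k ⬝ᵥ θ0 = 1 := by
    refine ⟨fun j' => if j' = j then (H k j)⁻¹ else 0, ?_⟩
    simp [dotProduct, mul_ite, mul_inv_cancel₀ hj]
  -- take a minimizer of l0Full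
  have hPne : ∃ c, ∃ θ : Fin n → ℝ, H k ⬝ᵥ θ = 1 ∧ l0Full H θ = c := by
    obtain ⟨θ0, h0⟩ := hfeas
    exact ⟨l0Full H θ0, θ0, h0, rfl⟩
  obtain ⟨θ, hθ1, hθc⟩ := Nat.sInf_mem hPne
  have hmin : ∀ θ' : Fin n → ℝ, H k ⬝ᵥ θ' = 1 → l0Full H θ ≤ l0Full H θ' := by
    intro θ' h'
    rw [hθc]
    exact Nat.sInf_le ⟨θ', h', rfl⟩
  refine ⟨θ, hθ1, hmin, ?_⟩
  -- the support of Hθ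
  set J : Finset (Fin m) := Finset.univ.filter (fun i => H.mulVec θ i ≠ 0) with hJ
  have hmemJ : ∀ i : Fin m, i ∈ J ↔ H i ⬝ᵥ θ ≠ 0 := by
    intro i; simp [hJ, mulVec_apply]
  have hJcard : J.card = l0Full H θ := by
    unfold l0Full
    congr 1
  have hkJ : k ∈ J := by
    rw [hmemJ, hθ1]; exact one_ne_zero
  have hθne : θ ≠ 0 := by
    intro h
    rw [h] at hθ1
    simp [dotProduct] at hθ1
  have hcompl : ∀ i ∈ Jᶜ, H i ⬝ᵥ θ = 0 := by
    intro i hi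
    have := (Finset.mem_compl.mp hi)
    rw [hmemJ] at this
    exact not_not.mp this
  have hJlt : (rowSub H Jᶜ).rank < n := (rank_lt_iff H Jᶜ).mpr ⟨θ, hθne, hcompl⟩
  -- full rank of rows in Jᶜ ∪ {k}
  have hJins : (rowSub H (insert k Jᶜ)).rank = n := by
    rcases lt_or_eq_of_le ((Matrix.rank_le_card_width (rowSub H (insert k Jᶜ))).trans (Fintype.card_fin n).le) with hlt | he
    · exfalso
      obtain ⟨v, hv0, hv⟩ := (rank_lt_iff H (insert k Jᶜ)).mp hlt
      have hkv : H k ⬝ᵥ v = 0 := hv k (Finset.mem_insert_self _ _)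
      have hHv : H.mulVec v ≠ 0 := fun h => hv0 (mulVec_eq_zero hrank h)
      obtain ⟨i, hi⟩ : ∃ i, H i ⬝ᵥ v ≠ 0 := by
        by_contra h
        push_neg at h
        exact hHv (funext h)
      have hiJ : i ∈ J := by
        by_contra h
        exact hi (hv i (Finset.mem_insert_of_mem (Finset.mem_compl.mpr h)))
      have hik : i ≠ k := fun h => hi (h ▸ hkv)
      set c : ℝ := (H i ⬝ᵥ θ) * (H i ⬝ᵥ v)⁻¹ with hc
      set θ' : Fin n → ℝ := θ - c • v with hθ'
      have hdot : ∀ r : Fin m, H r ⬝ᵥ θ' = H r ⬝ᵥ θ - c * (H r ⬝ᵥ v) := by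
        intro r
        simp [hθ', dotProduct, Finset.sum_sub_distrib, Finset.mul_sum, mul_sub,
          mul_left_comm, mul_comm, mul_assoc]
      have hθ'1 : H k ⬝ᵥ θ' = 1 := by rw [hdot, hkv, hθ1]; ring
      have hi0 : H i ⬝ᵥ θ' = 0 := by
        rw [hdot, hc]
        field_simp
        ring
      have hsub : ∀ r, H.mulVec θ' r ≠ 0 → r ∈ J.erase i := by
        intro r hr
        rw [Finset.mem_erase]
        constructor
        · intro h
          subst h
          exact hr (by rw [Stmt7Aux.mulVec_apply]; exact hi0)
        · rw [hmemJ]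
          intro h0
          apply hr
          rw [Stmt7Aux.mulVec_apply, hdot, h0]
          have : H r ⬝ᵥ v = 0 := hv r (Finset.mem_insert_of_mem (Finset.mem_compl.mpr
            (by rw [hmemJ]; exact not_not.mpr h0)))
          rw [this]; ring
      have hle : l0Full H θ' ≤ (J.erase i).card := l0Full_le_card H θ' _ hsub
      have hlt' : l0Full H θ' < J.card := by
        have := Finset.card_erase_of_mem hiJ
        have hpos : 0 < J.card := Finset.card_pos.mpr ⟨i, hiJ⟩
        omega
      rw [hJcard] at hlt'
      exact absurd (hmin θ' hθ'1) (not_le.mpr hlt')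
    · exact he
  refine ⟨J, ⟨hkJ, hJlt, hJins⟩, ?_, hJcard⟩
  -- minimality of J
  intro J' hJ'
  obtain ⟨hkJ', hJ'lt, hJ'ins⟩ := hJ'
  obtain ⟨v, hv0, hv⟩ := (rank_lt_iff H J'ᶜ).mp hJ'lt
  have hkv : H k ⬝ᵥ v ≠ 0 := by
    intro h
    have : (rowSub H (insert k J'ᶜ)).rank < n := by
      refine (rank_lt_iff H _).mpr ⟨v, hv0, ?_⟩
      intro i hi
      rcases Finset.mem_insert.mp hi with h' | h'
      · rw [h']; exact h
      · exact hv i h'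
    omega
  set θ' : Fin n → ℝ := (H k ⬝ᵥ v)⁻¹ • v with hθ'
  have hdot : ∀ r : Fin m, H r ⬝ᵥ θ' = (H k ⬝ᵥ v)⁻¹ * (H r ⬝ᵥ v) := by
    intro r
    simp [hθ', dotProduct, Finset.mul_sum, mul_left_comm, mul_comm, mul_assoc]
  have hθ'1 : H k ⬝ᵥ θ' = 1 := by
    rw [hdot]
    exact inv_mul_cancel₀ hkv
  have hsub : ∀ r, H.mulVec θ' r ≠ 0 → r ∈ J' := by
    intro r hr
    by_contra h
    apply hr
    rw [Stmt7Aux.mulVec_apply, hdot, hv r (Finset.mem_compl.mpr h)]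
    ring
  calc J.card = l0Full H θ := hJcard
    _ ≤ l0Full H θ' := hmin θ' hθ'1
    _ ≤ J'.card := l0Full_le_card H θ' _ hsub
end

section
/- Let H be a real m×n matrix, k ∈ {1,…,m} with H(k,:) ≠ 0 and rank(H) = n, and let θ* minimize ‖Hθ‖₀ over all θ ∈ ℝⁿ with H(k,:)θ = 1. Define J_{θ*} = {i ∈ {1,…,m} : H(i,:)θ* ≠ 0}. Then k ∈ J_{θ*}, rank(H(J̄_{θ*},:)) < n, rank(H(J̄_{θ*} ∪ {k},:)) = n, and |J_{θ*}| = ‖Hθ*‖₀. -/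
open Matrix

lemma aux_rank_lt {ι : Type*} [Fintype ι] {n : ℕ} (A : Matrix ι (Fin n) ℝ) :
    A.rank < n ↔ ∃ v : Fin n → ℝ, v ≠ 0 ∧ A.mulVec v = 0 := by
  have hadd := LinearMap.finrank_range_add_finrank_ker A.mulVecLin
  rw [Module.finrank_fintype_fun_eq_card, Fintype.card_fin] at hadd
  rw [Matrix.rank]
  constructor
  · intro h
    have hk : LinearMap.ker A.mulVecLin ≠ ⊥ := by
      intro hb
      rw [hb, finrank_bot] at hadd
      omega
    obtain ⟨v, hv, hv0⟩ := Submodule.exists_mem_ne_zero_of_ne_bot hk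
    exact ⟨v, hv0, hv⟩
  · rintro ⟨v, hv0, hv⟩
    have hk : LinearMap.ker A.mulVecLin ≠ ⊥ := by
      intro hb
      have : v ∈ LinearMap.ker A.mulVecLin := hv
      rw [hb, Submodule.mem_bot] at this
      exact hv0 this
    have : Module.finrank ℝ (LinearMap.ker A.mulVecLin) ≠ 0 := by
      intro h0
      exact hk (Submodule.finrank_eq_zero.mp h0)
    omega

lemma rowSub_mulVec {m n : ℕ} (H : Matrix (Fin m) (Fin n) ℝ) (S : Finset (Fin m))
    (v : Fin n → ℝ) (i : {i : Fin m // i ∈ S}) :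
    (rowSub H S).mulVec v i = H i.1 ⬝ᵥ v := rfl

open Classical in
/-- If `θ*` minimizes `‖Hθ‖₀` subject to `H(k,:)θ = 1`, where `H(k,:) ≠ 0` and `rank H = n`,
then the support `J_{θ*} = {i : H(i,:)θ* ≠ 0}` contains `k`, satisfies
`rank(H(J̄_{θ*},:)) < n` and `rank(H(J̄_{θ*} ∪ {k},:)) = n`, and `|J_{θ*}| = ‖Hθ*‖₀`. -/
theorem stmt8 {m n : ℕ} (H : Matrix (Fin m) (Fin n) ℝ) (k : Fin m)
    (hrow : H k ≠ 0) (hrank : H.rank = n)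
    (θs : Fin n → ℝ) (hfeas : H k ⬝ᵥ θs = 1)
    (hopt : ∀ θ' : Fin n → ℝ, H k ⬝ᵥ θ' = 1 → l0Full H θs ≤ l0Full H θ')
    (J : Finset (Fin m)) (hJ : J = Finset.univ.filter fun i => H.mulVec θs i ≠ 0) :
    k ∈ J ∧ (rowSub H Jᶜ).rank < n ∧ (rowSub H (insert k Jᶜ)).rank = n ∧
      J.card = l0Full H θs := by
  have memJ : ∀ i : Fin m, i ∈ J ↔ H i ⬝ᵥ θs ≠ 0 := by
    intro i; rw [hJ, Finset.mem_filter]; exact ⟨fun h => h.2, fun h => ⟨Finset.mem_univ _, h⟩⟩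
  have hkJ : k ∈ J := by rw [memJ]; rw [hfeas]; norm_num
  -- injectivity of H
  have hHinj : ∀ v : Fin n → ℝ, H.mulVec v = 0 → v = 0 := by
    intro v hv
    by_contra hv0
    have : H.rank < n := (aux_rank_lt H).mpr ⟨v, hv0, hv⟩
    omega
  have hzero : ∀ i : Fin m, i ∉ J → H i ⬝ᵥ θs = 0 := by
    intro i hi; by_contra h; exact hi ((memJ i).mpr h)
  refine ⟨hkJ, ?_, ?_, by rw [hJ, l0Full]⟩
  · -- rank of rows outside J is < n : θs is a nonzero kernel vector
    apply (aux_rank_lt _).mpr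
    refine ⟨θs, ?_, ?_⟩
    · intro h0
      rw [h0] at hfeas
      simp [dotProduct] at hfeas
    · funext i
      rw [rowSub_mulVec]
      have hiJ : i.1 ∉ J := Finset.mem_compl.mp i.2
      simpa using hzero i.1 hiJ
  · -- rank of rows (Jᶜ ∪ {k}) equals n
    have hle : (rowSub H (insert k Jᶜ)).rank ≤ n := by
      have := Matrix.rank_le_card_width (rowSub H (insert k Jᶜ))
      simpa using this
    rcases lt_or_eq_of_le hle with hlt | he
    · exfalso
      obtain ⟨v, hv0, hv⟩ := (aux_rank_lt _).mp hlt
      have hvrow : ∀ i : Fin m, i ∈ insert k Jᶜ → H i ⬝ᵥ v = 0 := by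
        intro i hi
        have := congrFun hv ⟨i, hi⟩
        rw [rowSub_mulVec] at this
        simpa using this
      have hkv : H k ⬝ᵥ v = 0 := hvrow k (Finset.mem_insert_self _ _)
      have hout : ∀ i : Fin m, i ∉ J → H i ⬝ᵥ v = 0 := fun i hi =>
        hvrow i (Finset.mem_insert_of_mem (Finset.mem_compl.mpr hi))
      -- there is a row i₀ with H i₀ ⬝ᵥ v ≠ 0
      have : H.mulVec v ≠ 0 := fun h => hv0 (hHinj v h)
      obtain ⟨i₀, hi₀⟩ : ∃ i, H i ⬝ᵥ v ≠ 0 := by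
        by_contra hall
        push_neg at hall
        exact this (funext fun i => hall i)
      have hi₀J : i₀ ∈ J := by
        by_contra h
        exact hi₀ (hout i₀ h)
      set t : ℝ := -(H i₀ ⬝ᵥ θs) / (H i₀ ⬝ᵥ v) with ht
      set θ' : Fin n → ℝ := θs + t • v with hθ'
      have hdot : ∀ i : Fin m, H i ⬝ᵥ θ' = H i ⬝ᵥ θs + t * (H i ⬝ᵥ v) := by
        intro i
        rw [hθ', dotProduct_add, dotProduct_smul, smul_eq_mul]
      have hfeas' : H k ⬝ᵥ θ' = 1 := by rw [hdot, hkv, hfeas]; ring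
      have hi₀' : H i₀ ⬝ᵥ θ' = 0 := by
        rw [hdot, ht]
        field_simp
        ring
      have hsub : (Finset.univ.filter fun i => H.mulVec θ' i ≠ 0) ⊆ J.erase i₀ := by
        intro i hi
        simp only [Finset.mem_filter] at hi
        have hne : H i ⬝ᵥ θ' ≠ 0 := hi.2
        refine Finset.mem_erase.mpr ⟨?_, ?_⟩
        · intro h; rw [h] at hne; exact hne hi₀'
        · by_contra h
          exact hne (by rw [hdot, hzero i h, hout i h]; ring)
      have hlt' : l0Full H θ' < l0Full H θs := by
        calc l0Full H θ' ≤ (J.erase i₀).card := Finset.card_le_card hsub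
        _ < J.card := Finset.card_erase_lt_of_mem hi₀J
        _ = l0Full H θs := by rw [hJ, l0Full]
      exact absurd (hopt θ' hfeas') (not_le.mpr hlt')
    · exact he
end

section
/- Let B be a totally unimodular real matrix with r rows, let J be a set of r column indices of B such that the r×r submatrix B(:,J) is nonsingular, and let b be any column of B. Then the unique solution v of the linear system B(:,J)v = b has every entry in {−1, 0, 1}. -/
open Matrix

/-- Cramer-type integrality: if `B` is totally unimodular with `r` rows, `J` is a set of `r`
columns of `B` (given by an injection `f`) whose square submatrix `B(:,J)` is nonsingular,
and `b` is any column of `B`, then the unique solution `v` of `B(:,J) v = b` has all entries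
in `{−1, 0, 1}`. -/
theorem stmt13 {r : ℕ} {ι : Type*} [Fintype ι] [DecidableEq ι]
    (B : Matrix (Fin r) ι ℝ) (hB : B.IsTotallyUnimodular)
    (f : Fin r → ι) (hf : Function.Injective f)
    (hdet : (B.submatrix id f).det ≠ 0)
    (j₀ : ι) (v : Fin r → ℝ)
    (hv : (B.submatrix id f).mulVec v = fun i => B i j₀) :
    ∀ i : Fin r, v i ∈ ({-1, 0, 1} : Set ℝ) := by
  intro i
  set A := B.submatrix id f with hA
  obtain ⟨s, hs⟩ := hB r id f Function.injective_id hf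
  have h2 : cramer A (A.mulVec v) = A.det • v := by
    have hmv : A.mulVec v = ∑ k, v k • (fun j => A j k) := by
      ext j
      simp [Matrix.mulVec, dotProduct, mul_comm]
    rw [hmv]
    simp only [map_sum, LinearMap.map_smul]
    have hc : ∀ k : Fin r, A.cramer (fun j => A j k) = Pi.single k A.det :=
      fun k => cramer_row_self A _ k (fun _ => rfl)
    ext l
    simp [hc, Pi.single_apply, smul_eq_mul, mul_comm]
  have hkey : A.det * v i = ((A.updateCol i (fun k => B k j₀)).det) := by
    rw [← cramer_apply, ← hv, h2]
    simp [mul_comm]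
  have hupd : (A.updateCol i (fun k => B k j₀)) =
      B.submatrix id (Function.update f i j₀) := by
    ext k l
    by_cases hl : l = i
    · subst hl; simp [Matrix.updateCol_apply, hA]
    · simp [Matrix.updateCol_apply, hl, hA, Function.update_of_ne hl]
  obtain ⟨t, ht⟩ := (B.isTotallyUnimodular_iff.mp hB) r id (Function.update f i j₀)
  rw [hupd, ← ht] at hkey
  rw [← hs] at hkey
  have hs0 : (s : ℝ) ≠ 0 := by rw [hs]; exact hdet
  have hvi : v i = (t : ℝ) / (s : ℝ) := by
    field_simp
    linarith [hkey]
  rw [hvi]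
  clear hkey hs ht hdet hvi hv h2 hupd
  rcases s <;> rcases t <;> simp_all
end
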